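/- arXiv:2406.15919 — 3 statements merged into one kernel-verified Lean document; each statement's English description precedes it below -/
import Mathlib

section
/- Let k be a field of characteristic zero, S = k[x,y] with the standard grading, let a, b be positive integers, J = (x^a, y^b), and let I be a monomial ideal of S with J ⊆ I and I/J ≠ 0. Then the graded S-module M = I/J has the strong Lefschetz property; in fact ℓ = x + y is a strong Lefschetz element, i.e., for every d > 0 and every i the multiplication map ×(x+y)^d : M_i → M_{i+d} is either injective or surjective. -/
open MvPolynomial

/-- The degree-`i` homogeneous component of the graded `k[x₁,…,xₙ]`-module `I/J`
(realized as the image of `I ∩ Sᵢ` in `S ⧸ J`). -/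
noncomputable def gradedPiece {k : Type} [Field k] {n : ℕ}
    (J I : Ideal (MvPolynomial (Fin n) k)) (i : ℕ) :
    Submodule k (MvPolynomial (Fin n) k ⧸ J) :=
  Submodule.map (Ideal.Quotient.mkₐ k J).toLinearMap
    (Submodule.restrictScalars k I ⊓ homogeneousSubmodule (Fin n) k i)

/-- `ℓ` is a strong Lefschetz element for the graded module `I/J`: for all `d > 0` and all `i`,
multiplication by `ℓ^d` from the degree-`i` component to the degree-`i+d` component is
injective or surjective. -/
def IsSLE {k : Type} [Field k] {n : ℕ} (J I : Ideal (MvPolynomial (Fin n) k))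
    (ℓ : MvPolynomial (Fin n) k) : Prop :=
  ∀ d : ℕ, 0 < d → ∀ i : ℕ,
    (∀ m ∈ gradedPiece J I i, Ideal.Quotient.mk J (ℓ ^ d) * m = 0 → m = 0) ∨
    (∀ m' ∈ gradedPiece J I (i + d), ∃ m ∈ gradedPiece J I i,
      Ideal.Quotient.mk J (ℓ ^ d) * m = m')

/-- A monomial ideal: an ideal generated by a set of monomials. -/
def IsMonomialIdeal {k : Type} [Field k] {n : ℕ} (I : Ideal (MvPolynomial (Fin n) k)) : Prop :=
  ∃ T : Set (Fin n →₀ ℕ), I = Ideal.span ((fun e => monomial e (1 : k)) '' T)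


/-- Binomial band entry. -/
def entryZ (d u v : ℕ) : ℤ := if u ≤ v then (d.choose (v - u) : ℤ) else 0

lemma entryZ_pascal (d u v : ℕ) :
    entryZ (d+1) u v = entryZ d u v + entryZ d (u+1) v := by
  unfold entryZ
  rcases le_or_gt u v with h | h
  · rcases eq_or_lt_of_le h with rfl | h'
    · simp [Nat.lt_irrefl]
    · have h1 : u + 1 ≤ v := h'
      have h2 : v - u = (v - (u+1)) + 1 := by omega
      simp only [if_pos h, if_pos h1, h2]
      rw [Nat.choose_succ_succ']
      push_cast; ring
  · have h1 : ¬ (u ≤ v) := by omega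
    have h2 : ¬ (u + 1 ≤ v) := by omega
    simp [h1, h2]

lemma entryZ_eq_zero_of_lt {d u v : ℕ} (h : v < u) : entryZ d u v = 0 := by
  simp [entryZ, Nat.not_le.mpr h]

lemma entryZ_eq_zero_of_gt {d u v : ℕ} (h : u + d < v) : entryZ d u v = 0 := by
  unfold entryZ
  rcases le_or_gt u v with h' | h'
  · rw [if_pos h', Nat.choose_eq_zero_of_lt (by omega)]; simp
  · rw [if_neg (by omega)]

lemma entryZ_zero (u v : ℕ) : entryZ 0 u v = if u = v then 1 else 0 := by
  unfold entryZ
  rcases lt_trichotomy u v with h | rfl | h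
  · rw [if_pos h.le, Nat.choose_eq_zero_of_lt (by omega), if_neg h.ne]; simp
  · simp
  · rw [if_neg (by omega), if_neg (by omega)]

theorem detEntryZ (d : ℕ) : ∀ (m : ℕ) (u v : Fin m → ℕ), StrictMono u → StrictMono v →
    0 ≤ Matrix.det (Matrix.of fun r s => entryZ d (u r) (v s)) ∧
    ((∀ r, u r ≤ v r ∧ v r ≤ u r + d) →
      0 < Matrix.det (Matrix.of fun r s => entryZ d (u r) (v s))) := by
  induction d with
  | zero =>
    intro m u v hu hv
    constructor
    · by_cases hrow : ∀ r, ∃ s, u r = v s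
      · choose f hf using hrow
        by_cases hsurj : Function.Surjective f
        · -- matrix is a permutation matrix for a strictMono bijection: identity
          have hfsm : StrictMono f := by
            intro r r' hrr
            exact hv.lt_iff_lt.mp (by rw [← hf, ← hf]; exact hu hrr)
          have hfid : f = id := by
            apply (hfsm.range_inj strictMono_id).mp
            exact Set.range_eq_univ.mpr hsurj |>.trans (Set.range_id).symm
          have : (Matrix.of fun r s => entryZ 0 (u r) (v s)) = (1 : Matrix (Fin m) (Fin m) ℤ) := by
            ext r s
            rw [Matrix.of_apply, entryZ_zero, Matrix.one_apply]
            have hr : u r = v r := by have := hf r; rwa [hfid, id] at this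
            by_cases h : r = s
            · subst h; simp [hr]
            · rw [if_neg h, if_neg]
              intro hc
              exact h (hv.injective (hr ▸ hc))
          rw [this, Matrix.det_one]; norm_num
        · rw [Function.Surjective] at hsurj
          push_neg at hsurj
          obtain ⟨s1, hs1⟩ := hsurj
          have : Matrix.det (Matrix.of fun r s => entryZ 0 (u r) (v s)) = 0 := by
            apply Matrix.det_eq_zero_of_column_eq_zero s1
            intro r
            rw [Matrix.of_apply, entryZ_zero, if_neg]
            intro hc
            exact hs1 r (hv.injective ((hf r).symm.trans hc))
          omega
      · push_neg at hrow
        obtain ⟨r, hr⟩ := hrow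
        have : Matrix.det (Matrix.of fun r s => entryZ 0 (u r) (v s)) = 0 := by
          apply Matrix.det_eq_zero_of_row_eq_zero r
          intro s
          rw [Matrix.of_apply, entryZ_zero, if_neg (hr s)]
        omega
    · intro hband
      have huv : u = v := funext fun r => le_antisymm (hband r).1 (by have := (hband r).2; omega)
      subst huv
      have : (Matrix.of fun r s => entryZ 0 (u r) (u s)) = (1 : Matrix (Fin m) (Fin m) ℤ) := by
        ext r s
        rw [Matrix.of_apply, entryZ_zero, Matrix.one_apply]
        by_cases h : r = s
        · subst h; simp
        · rw [if_neg (fun hc => h (hu.injective hc)), if_neg h]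
      rw [this, Matrix.det_one]; norm_num
  | succ d ih =>
    intro m u v hu hv
    classical
    set A : Fin m → Fin m → ℤ := fun r => fun s => entryZ d (u r) (v s) with hA
    set B : Fin m → Fin m → ℤ := fun r => fun s => entryZ d (u r + 1) (v s) with hB
    have expand : Matrix.det (Matrix.of fun r s => entryZ (d+1) (u r) (v s)) =
        ∑ S : Finset (Fin m), Matrix.det (Matrix.of fun r s =>
          entryZ d (u r + (if r ∈ S then 0 else 1)) (v s)) := by
      have h1 : (Matrix.of fun r s => entryZ (d+1) (u r) (v s) :
          Matrix (Fin m) (Fin m) ℤ) = A + B := by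
        ext r s
        simp only [Matrix.of_apply, Matrix.add_apply, hA, hB]
        exact entryZ_pascal d (u r) (v s)
      rw [h1]
      have h2 := (Matrix.detRowAlternating :
        (Fin m → ℤ) [⋀^Fin m]→ₗ[ℤ] ℤ).toMultilinearMap.map_add_univ A B
      have h4 : Matrix.det (A + B) =
          ∑ S : Finset (Fin m), Matrix.det (S.piecewise A B) := h2
      rw [h4]
      apply Finset.sum_congr rfl
      intro S _
      congr 1
      ext r s
      by_cases h : r ∈ S <;> simp [Finset.piecewise, h, hA, hB, Matrix.of_apply]
    have uSmono : ∀ S : Finset (Fin m), ∀ r r' : Fin m, r < r' →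
        u r + (if r ∈ S then 0 else 1) ≤ u r' + (if r' ∈ S then 0 else 1) := by
      intro S r r' hrr
      have := hu hrr
      by_cases h : r ∈ S <;> by_cases h' : r' ∈ S <;> simp [h, h'] <;> omega
    have key : ∀ S : Finset (Fin m), 0 ≤ Matrix.det (Matrix.of fun r s =>
          entryZ d (u r + (if r ∈ S then 0 else 1)) (v s)) := by
      intro S
      set uS : Fin m → ℕ := fun r => u r + (if r ∈ S then 0 else 1) with huS
      by_cases hsm : StrictMono uS
      · exact (ih m uS v hsm hv).1
      · rw [StrictMono] at hsm
        push_neg at hsm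
        obtain ⟨r, r', hlt, hle⟩ := hsm
        have heq : uS r = uS r' := le_antisymm (uSmono S r r' hlt) hle
        have : Matrix.det (Matrix.of fun r s => entryZ d (uS r) (v s)) = 0 := by
          apply Matrix.det_zero_of_row_eq (ne_of_lt hlt)
          ext s
          simp only [Matrix.of_apply, heq]
        rw [this]
    constructor
    · rw [expand]
      exact Finset.sum_nonneg fun S _ => key S
    · intro hband
      rw [expand]
      apply Finset.sum_pos' (fun S _ => key S)
      refine ⟨Finset.univ.filter (fun r => v r ≠ u r + (d+1)), Finset.mem_univ _, ?_⟩
      set S0 : Finset (Fin m) := Finset.univ.filter (fun r => v r ≠ u r + (d+1)) with hS0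
      set uS : Fin m → ℕ := fun r => u r + (if r ∈ S0 then 0 else 1) with huS
      have hmem : ∀ r, (r ∈ S0 ↔ v r ≠ u r + (d+1)) := by
        intro r; simp [hS0]
      have hsm : StrictMono uS := by
        intro r r' hrr
        have h1 := hu hrr
        have h2 := hv hrr
        have hb1 := hband r
        have hb2 := hband r'
        by_cases h : r ∈ S0
        · by_cases h' : r' ∈ S0
          · simp only [huS, if_pos h, if_pos h']; omega
          · simp only [huS, if_pos h, if_neg h']; omega
        · have hv1 : v r = u r + (d+1) := by
            by_contra hc; exact h ((hmem r).mpr hc)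
          by_cases hcase : u r + 2 ≤ u r'
          · by_cases h' : r' ∈ S0
            · simp only [huS, if_neg h, if_pos h']; omega
            · simp only [huS, if_neg h, if_neg h']; omega
          · have hur : u r' = u r + 1 := by omega
            have h' : r' ∉ S0 := by
              intro hmem'
              have := (hmem r').mp hmem'
              omega
            simp only [huS, if_neg h, if_neg h']
            omega
      have hbd : ∀ r, uS r ≤ v r ∧ v r ≤ uS r + d := by
        intro r
        have hb := hband r
        by_cases h : r ∈ S0
        · have := (hmem r).mp h
          simp only [huS, if_pos h]
          omega
        · have : v r = u r + (d+1) := by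
            by_contra hc
            exact h ((hmem r).mpr hc)
          simp only [huS, if_neg h]
          omega
      exact (ih m uS v hsm hv).2 hbd

lemma strictMono_gap {m : ℕ} {u : Fin m → ℕ} (hu : StrictMono u) :
    ∀ (k : ℕ) (r s : Fin m), (s : ℕ) = (r : ℕ) + k → u r + k ≤ u s := by
  intro k
  induction k with
  | zero =>
    intro r s h
    have : r = s := Fin.ext (by omega)
    subst this; omega
  | succ k ihk =>
    intro r s h
    have hs' : (s : ℕ) - 1 < m := by omega
    set s' : Fin m := ⟨(s : ℕ) - 1, hs'⟩ with hs'def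
    have h1 := ihk r s' (by simp [hs'def]; omega)
    have h2 : u s' < u s := hu (by rw [Fin.lt_iff_val_lt_val]; simp [hs'def]; omega)
    omega

theorem interval_matching : ∀ (n : ℕ) (A : Finset ℕ) (l u : Fin n → ℕ), Monotone l →
    (∀ r s : Fin n, r ≤ s → (s : ℕ) - (r : ℕ) + 1 ≤ (A.filter (fun x => l r ≤ x ∧ x ≤ u s)).card) →
    ∃ ψ : Fin n → ℕ, StrictMono ψ ∧ ∀ r, ψ r ∈ A ∧ l r ≤ ψ r ∧ ψ r ≤ u r := by
  intro n
  induction n with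
  | zero =>
    intro A l u _ _
    exact ⟨fun r => 0, fun r r' h => r.elim0, fun r => r.elim0⟩
  | succ n ih =>
    intro A l u hl hHall
    classical
    have hC : (A.filter (fun x => l 0 ≤ x ∧ x ≤ u 0)).Nonempty := by
      have := hHall 0 0 le_rfl
      exact Finset.card_pos.mp (by omega)
    set ψ0 := (A.filter (fun x => l 0 ≤ x ∧ x ≤ u 0)).min' hC with hψ0
    have hψ0mem := Finset.min'_mem _ hC
    rw [Finset.mem_filter] at hψ0mem
    set A' := A.filter (fun x => ψ0 < x) with hA'
    have hHall' : ∀ r s : Fin n, r ≤ s →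
        (s : ℕ) - (r : ℕ) + 1 ≤
          (A'.filter (fun x => l r.succ ≤ x ∧ x ≤ u s.succ)).card := by
      intro r s hrs
      have hsucc : ((s.succ : Fin (n+1)) : ℕ) - ((r.succ : Fin (n+1)) : ℕ) + 1
          = (s : ℕ) - (r : ℕ) + 1 := by simp [Fin.val_succ]
      by_cases hcase : ψ0 < l r.succ
      · have heq : A'.filter (fun x => l r.succ ≤ x ∧ x ≤ u s.succ)
             = A.filter (fun x => l r.succ ≤ x ∧ x ≤ u s.succ) := by
          ext x
          simp only [hA', Finset.mem_filter]
          constructor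
          · rintro ⟨⟨hx, _⟩, h⟩; exact ⟨hx, h⟩
          · rintro ⟨hx, h1, h2⟩; exact ⟨⟨hx, by omega⟩, h1, h2⟩
        rw [heq]
        have := hHall r.succ s.succ (Fin.succ_le_succ_iff.mpr hrs)
        omega
      · push_neg at hcase
        have hkey : ∀ x ∈ A, l 0 ≤ x → x ≤ u s.succ → (¬ (l r.succ ≤ x ∧ ψ0 < x)) → x = ψ0 := by
          intro x hx h0 hus hnot
          have hxle : x ≤ ψ0 := by
            by_contra hgt
            push_neg at hgt
            exact hnot ⟨by omega, hgt⟩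
          have hxC : x ∈ A.filter (fun y => l 0 ≤ y ∧ y ≤ u 0) := by
            rw [Finset.mem_filter]
            exact ⟨hx, h0, le_trans hxle hψ0mem.2.2⟩
          have := Finset.min'_le _ x hxC
          omega
        have hsub : A.filter (fun x => l 0 ≤ x ∧ x ≤ u s.succ) ⊆
            insert ψ0 (A'.filter (fun x => l r.succ ≤ x ∧ x ≤ u s.succ)) := by
          intro x hx
          rw [Finset.mem_filter] at hx
          rw [Finset.mem_insert]
          by_cases h : l r.succ ≤ x ∧ ψ0 < x
          · right
            rw [hA']
            exact Finset.mem_filter.mpr ⟨Finset.mem_filter.mpr ⟨hx.1, h.2⟩, h.1, hx.2.2⟩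
          · left; exact hkey x hx.1 hx.2.1 hx.2.2 h
        have hG := hHall 0 s.succ (Fin.zero_le _)
        have h1 := Finset.card_le_card hsub
        have h2 := Finset.card_insert_le ψ0 (A'.filter (fun x => l r.succ ≤ x ∧ x ≤ u s.succ))
        have h3 : ((0 : Fin (n+1)) : ℕ) = 0 := rfl
        have h4 : ((s.succ : Fin (n+1)) : ℕ) = (s : ℕ) + 1 := by simp [Fin.val_succ]
        omega
    obtain ⟨ψ', hψ'm, hψ'⟩ := ih A' (fun r => l r.succ) (fun r => u r.succ)
        (fun r s hrs => hl (Fin.succ_le_succ_iff.mpr hrs)) hHall'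
    refine ⟨Fin.cases ψ0 ψ', ?_, ?_⟩
    · intro r r' hlt
      induction r' using Fin.cases with
      | zero => exact absurd hlt (by simp [Fin.lt_iff_val_lt_val])
      | succ j =>
        induction r using Fin.cases with
        | zero =>
          simp only [Fin.cases_zero, Fin.cases_succ]
          have h1 := (hψ' j).1
          rw [hA', Finset.mem_filter] at h1
          exact h1.2
        | succ i =>
          simp only [Fin.cases_succ]
          exact hψ'm (by rwa [Fin.succ_lt_succ_iff] at hlt)
    · intro r
      induction r using Fin.cases with
      | zero =>
        simp only [Fin.cases_zero]
        exact ⟨hψ0mem.1, hψ0mem.2.1, hψ0mem.2.2⟩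
      | succ i =>
        simp only [Fin.cases_succ]
        have h1 := (hψ' i).1
        rw [hA', Finset.mem_filter] at h1
        exact ⟨h1.1, (hψ' i).2.1, (hψ' i).2.2⟩

lemma star_count (A B : Finset ℕ) (d cmin cmax : ℕ)
    (hBlo : ∀ j ∈ B, cmin ≤ j) (hBhi : ∀ j ∈ B, j ≤ cmax)
    (hAhi : ∀ i ∈ A, i ≤ cmax) (hAd : ∀ i ∈ A, cmin ≤ i + d)
    (hup : ∀ i ∈ A, ∀ j, i ≤ j → j ≤ i + d → cmin ≤ j → j ≤ cmax → j ∈ B)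
    (hcard : B.card ≤ A.card) (w0 w1 : ℕ) (hw0 : w0 ∈ B) (hw1 : w1 ∈ B) (hw01 : w0 ≤ w1) :
    (B.filter (fun j => w0 ≤ j ∧ j ≤ w1)).card ≤
      (A.filter (fun i => w0 ≤ i + d ∧ i ≤ w1)).card := by
  classical
  have hlow : (A.filter (fun i => i + d < w0)).card ≤ (B.filter (fun j => j < w0)).card := by
    apply Finset.card_le_card_of_injOn (fun i => i + d)
    · intro i hi
      simp only [Finset.mem_coe, Finset.mem_filter] at hi ⊢
      obtain ⟨hiA, hilt⟩ := hi
      have := hBhi w0 hw0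
      exact ⟨hup i hiA (i + d) (by omega) le_rfl (hAd i hiA) (by omega), hilt⟩
    · intro x _ y _ h
      have hxy : x + d = y + d := h
      omega
  have hhi : (A.filter (fun i => w1 < i)).card ≤ (B.filter (fun j => w1 < j)).card := by
    apply Finset.card_le_card_of_injOn id
    · intro i hi
      simp only [Finset.mem_coe, Finset.mem_filter] at hi ⊢
      obtain ⟨hiA, hilt⟩ := hi
      have := hBlo w1 hw1
      exact ⟨hup i hiA i le_rfl (by omega) (by omega) (hAhi i hiA), hilt⟩
    · intro x _ y _ h; exact h
  have hAcover : A.card ≤ (A.filter (fun i => i + d < w0)).card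
      + (A.filter (fun i => w1 < i)).card
      + (A.filter (fun i => w0 ≤ i + d ∧ i ≤ w1)).card := by
    have hsub : A ⊆ (A.filter (fun i => i + d < w0)) ∪ (A.filter (fun i => w1 < i))
        ∪ (A.filter (fun i => w0 ≤ i + d ∧ i ≤ w1)) := by
      intro x hx
      simp only [Finset.mem_union, Finset.mem_filter]
      by_cases h1 : x + d < w0
      · exact Or.inl (Or.inl ⟨hx, h1⟩)
      · by_cases h2 : w1 < x
        · exact Or.inl (Or.inr ⟨hx, h2⟩)
        · exact Or.inr ⟨hx, by omega, by omega⟩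
    calc A.card ≤ _ := Finset.card_le_card hsub
    _ ≤ _ := le_trans (Finset.card_union_le _ _)
        (by exact Nat.add_le_add_right (Finset.card_union_le _ _) _)
  have hBdisj : (B.filter (fun j => j < w0)).card + (B.filter (fun j => w1 < j)).card
      + (B.filter (fun j => w0 ≤ j ∧ j ≤ w1)).card ≤ B.card := by
    have d1 : Disjoint (B.filter (fun j => j < w0)) (B.filter (fun j => w1 < j)) := by
      rw [Finset.disjoint_left]
      intro x hx hx'
      rw [Finset.mem_filter] at hx hx'
      omega
    have d2 : Disjoint ((B.filter (fun j => j < w0)) ∪ (B.filter (fun j => w1 < j)))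
        (B.filter (fun j => w0 ≤ j ∧ j ≤ w1)) := by
      rw [Finset.disjoint_left]
      intro x hx hx'
      rw [Finset.mem_union] at hx
      rw [Finset.mem_filter] at hx'
      rcases hx with hx | hx <;> rw [Finset.mem_filter] at hx <;> omega
    calc (B.filter (fun j => j < w0)).card + (B.filter (fun j => w1 < j)).card
          + (B.filter (fun j => w0 ≤ j ∧ j ≤ w1)).card
        = ((B.filter (fun j => j < w0)) ∪ (B.filter (fun j => w1 < j))
            ∪ (B.filter (fun j => w0 ≤ j ∧ j ≤ w1))).card := by
          rw [Finset.card_union_of_disjoint d2, Finset.card_union_of_disjoint d1]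
    _ ≤ B.card := Finset.card_le_card (by
          intro x hx
          simp only [Finset.mem_union, Finset.mem_filter] at hx
          tauto)
  omega

open MvPolynomial

variable {k : Type} [Field k]

noncomputable def Ee (i j : ℕ) : Fin 2 →₀ ℕ := Finsupp.single 0 i + Finsupp.single 1 j

lemma Ee_apply0 (i j : ℕ) : Ee i j 0 = i := by
  simp [Ee, Finsupp.single_apply]

lemma Ee_apply1 (i j : ℕ) : Ee i j 1 = j := by
  simp [Ee, Finsupp.single_apply]

lemma Ee_add (i j i' j' : ℕ) : Ee i j + Ee i' j' = Ee (i + i') (j + j') := by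
  ext x
  fin_cases x <;> simp [Ee, Finsupp.single_apply]

lemma eq_Ee (e : Fin 2 →₀ ℕ) : e = Ee (e 0) (e 1) := by
  ext x
  fin_cases x <;> simp [Ee, Finsupp.single_apply]

lemma Ee_inj {i j i' j' : ℕ} (h : Ee i j = Ee i' j') : i = i' ∧ j = j' := by
  constructor
  · have := congrArg (fun f => f 0) h; simpa [Ee_apply0] using this
  · have := congrArg (fun f => f 1) h; simpa [Ee_apply1] using this

lemma degree_two (e : Fin 2 →₀ ℕ) : e.degree = e 0 + e 1 := by
  rw [Finsupp.degree_apply]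
  rw [Finset.sum_subset (Finset.subset_univ e.support)]
  · exact Fin.sum_univ_two e
  · intro x _ hx
    simpa using Finsupp.notMem_support_iff.mp hx

lemma Ee_degree (i j : ℕ) : (Ee i j).degree = i + j := by
  rw [degree_two, Ee_apply0, Ee_apply1]

lemma single_le_iff_apply (x : Fin 2) (n : ℕ) (e : Fin 2 →₀ ℕ) :
    Finsupp.single x n ≤ e ↔ n ≤ e x := Finsupp.single_le_iff

/-- membership in J = (x^a, y^b) -/
lemma mem_J_iff (a b : ℕ) (p : MvPolynomial (Fin 2) k) :
    p ∈ Ideal.span {(X 0 : MvPolynomial (Fin 2) k) ^ a, X 1 ^ b}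
      ↔ ∀ e ∈ p.support, a ≤ e 0 ∨ b ≤ e 1 := by
  have himg : {(X 0 : MvPolynomial (Fin 2) k) ^ a, X 1 ^ b}
      = (fun e => monomial e (1 : k)) '' {Finsupp.single 0 a, Finsupp.single 1 b} := by
    rw [Set.image_pair]
    simp [X_pow_eq_monomial]
  rw [himg, mem_ideal_span_monomial_image]
  constructor
  · intro h e he
    obtain ⟨si, hsi, hle⟩ := h e he
    rcases hsi with rfl | rfl
    · exact Or.inl (Finsupp.single_le_iff.mp hle)
    · exact Or.inr (Finsupp.single_le_iff.mp hle)
  · intro h e he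
    rcases h e he with h' | h'
    · exact ⟨Finsupp.single 0 a, Or.inl rfl, Finsupp.single_le_iff.mpr h'⟩
    · exact ⟨Finsupp.single 1 b, Or.inr rfl, Finsupp.single_le_iff.mpr h'⟩

/-- in a monomial ideal, each monomial of a member is a member -/
lemma monomial_mem_of_mem {I : Ideal (MvPolynomial (Fin 2) k)}
    (hI : ∃ T : Set (Fin 2 →₀ ℕ), I = Ideal.span ((fun e => monomial e (1 : k)) '' T))
    {p : MvPolynomial (Fin 2) k} (hp : p ∈ I) {e : Fin 2 →₀ ℕ} (he : e ∈ p.support) (c : k) :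
    monomial e c ∈ I := by
  classical
  by_cases hc : c = 0
  · subst hc
    rw [show (monomial e (0 : k)) = 0 by simp]
    exact Ideal.zero_mem _
  · obtain ⟨T, rfl⟩ := hI
    rw [mem_ideal_span_monomial_image] at hp ⊢
    intro e' he'
    rw [support_monomial, if_neg hc, Finset.mem_singleton] at he'
    rw [he']
    exact hp e he

/-- scalar multiples of monomials in an ideal -/
lemma monomial_smul_mem {I : Ideal (MvPolynomial (Fin 2) k)} {e : Fin 2 →₀ ℕ}
    (h : monomial e (1 : k) ∈ I) (c : k) : monomial e c ∈ I := by
  have : monomial e c = (C c : MvPolynomial (Fin 2) k) * monomial e 1 := by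
    rw [C_mul_monomial, mul_one]
  rw [this]
  exact Ideal.mul_mem_left _ _ h

lemma coeff_ellpow_mul_monomial (d t i j : ℕ) (hi : i ≤ t) (hj : j ≤ t + d)
    (c : k) :
    coeff (Ee j (t + d - j)) (((X 0 + X 1 : MvPolynomial (Fin 2) k)) ^ d
      * monomial (Ee i (t - i)) c)
    = (if i ≤ j ∧ j ≤ i + d then ((d.choose (j - i) : ℕ) : k) else 0) * c := by
  rw [add_pow, Finset.sum_mul, coeff_sum]
  have hterm : ∀ c' ∈ Finset.range (d + 1),
      (X 0 : MvPolynomial (Fin 2) k) ^ c' * X 1 ^ (d - c') * ((d.choose c' : ℕ) : MvPolynomial (Fin 2) k)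
        * monomial (Ee i (t - i)) c
      = monomial (Ee (i + c') ((t - i) + (d - c'))) ((d.choose c' : k) * c) := by
    intro c' _
    have hexp : Finsupp.single (0 : Fin 2) c' + Finsupp.single (1 : Fin 2) (d - c')
        + Ee i (t - i) = Ee (i + c') (t - i + (d - c')) := by
      ext x
      fin_cases x <;> simp [Ee, Finsupp.add_apply, Finsupp.single_apply] <;> omega
    calc X 0 ^ c' * X 1 ^ (d - c') * ((d.choose c' : ℕ) : MvPolynomial (Fin 2) k)
          * monomial (Ee i (t - i)) c
        = ((d.choose c' : ℕ) : MvPolynomial (Fin 2) k)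
          * (X 0 ^ c' * X 1 ^ (d - c') * monomial (Ee i (t - i)) c) := by ring
      _ = ((d.choose c' : ℕ) : MvPolynomial (Fin 2) k)
          * monomial (Ee (i + c') (t - i + (d - c'))) c := by
          rw [X_pow_eq_monomial, X_pow_eq_monomial]
          simp only [monomial_mul, one_mul]
          rw [hexp]
      _ = monomial (Ee (i + c') (t - i + (d - c'))) ((d.choose c' : k) * c) := by
          rw [← map_natCast (C : k →+* MvPolynomial (Fin 2) k), C_mul_monomial]
  rw [Finset.sum_congr rfl (fun c' hc' => by rw [hterm c' hc', coeff_monomial])]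
  by_cases hij : i ≤ j ∧ j ≤ i + d
  · rw [if_pos hij]
    rw [Finset.sum_eq_single (j - i)]
    · have hcond : Ee (i + (j - i)) (t - i + (d - (j - i))) = Ee j (t + d - j) := by
        rw [show i + (j - i) = j by omega, show t - i + (d - (j - i)) = t + d - j by omega]
      rw [if_pos hcond]
    · intro c' _ hne
      rw [if_neg]
      intro hEe
      exact hne (by have := (Ee_inj hEe).1; omega)
    · intro habs
      exact absurd (Finset.mem_range.mpr (by omega)) habs
  · rw [if_neg hij, zero_mul]
    apply Finset.sum_eq_zero
    intro c' hc'
    rw [Finset.mem_range] at hc'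
    rw [if_neg]
    intro hEe
    have := (Ee_inj hEe).1
    omega

lemma coeff_ellpow_mul (d t : ℕ) (p : MvPolynomial (Fin 2) k) (hp : p.IsHomogeneous t)
    (j : ℕ) (hj : j ≤ t + d) :
    coeff (Ee j (t + d - j)) (((X 0 + X 1 : MvPolynomial (Fin 2) k)) ^ d * p)
    = ∑ e ∈ p.support, (if e 0 ≤ j ∧ j ≤ e 0 + d then ((d.choose (j - e 0) : ℕ) : k) else 0)
        * coeff (Ee (e 0) (t - e 0)) p := by
  conv_lhs => rw [as_sum p]
  rw [Finset.mul_sum, coeff_sum]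
  apply Finset.sum_congr rfl
  intro e he
  have hdeg : e.degree = t := by
    by_contra h
    exact (mem_support_iff.mp he) (hp.coeff_eq_zero h)
  have he0 : e 0 ≤ t := by rw [degree_two] at hdeg; omega
  have heE : e = Ee (e 0) (t - e 0) := by
    rw [degree_two] at hdeg
    conv_lhs => rw [eq_Ee e]
    rw [show t - e 0 = e 1 by omega]
  have hmono : monomial e (coeff e p)
      = monomial (Ee (e 0) (t - e 0)) (coeff (Ee (e 0) (t - e 0)) p) := by rw [← heE]
  rw [hmono, coeff_ellpow_mul_monomial d t (e 0) j he0 hj]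

section Assembly

variable {k : Type} [Field k]

open scoped Classical in
/-- indices of box monomials of degree `t` lying in `I` -/
noncomputable def Afin (I : Ideal (MvPolynomial (Fin 2) k)) (a b t : ℕ) : Finset ℕ :=
  (Finset.range a).filter (fun i => i ≤ t ∧ t - i < b ∧ monomial (Ee i (t - i)) (1 : k) ∈ I)

lemma mem_Afin {I : Ideal (MvPolynomial (Fin 2) k)} {a b t i : ℕ} :
    i ∈ Afin I a b t ↔
      i < a ∧ i ≤ t ∧ t - i < b ∧ monomial (Ee i (t - i)) (1 : k) ∈ I := by
  simp [Afin, Finset.mem_filter, Finset.mem_range, and_assoc]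

lemma mem_gradedPiece_iff {n : ℕ} (J I : Ideal (MvPolynomial (Fin n) k)) (s : ℕ)
    (m : MvPolynomial (Fin n) k ⧸ J) :
    m ∈ gradedPiece J I s ↔
      ∃ p, p ∈ I ∧ MvPolynomial.IsHomogeneous p s ∧ Ideal.Quotient.mk J p = m := by
  unfold gradedPiece
  rw [Submodule.mem_map]
  constructor
  · rintro ⟨p, hp, rfl⟩
    rw [Submodule.mem_inf] at hp
    exact ⟨p, (Submodule.restrictScalars_mem _ _ _).mp hp.1,
      (mem_homogeneousSubmodule _ _).mp hp.2, rfl⟩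
  · rintro ⟨p, h1, h2, h3⟩
    exact ⟨p, Submodule.mem_inf.mpr ⟨(Submodule.restrictScalars_mem _ _ _).mpr h1,
      (mem_homogeneousSubmodule _ _).mpr h2⟩, h3⟩

lemma entry_cast (d i j : ℕ) :
    (if i ≤ j ∧ j ≤ i + d then ((d.choose (j - i) : ℕ) : k) else 0)
      = ((entryZ d i j : ℤ) : k) := by
  unfold entryZ
  by_cases h1 : i ≤ j
  · by_cases h2 : j ≤ i + d
    · rw [if_pos ⟨h1, h2⟩, if_pos h1]; push_cast; ring
    · rw [if_neg (by tauto), if_pos h1, Nat.choose_eq_zero_of_lt (by omega)]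
      push_cast; ring
  · rw [if_neg (by tauto), if_neg h1]; push_cast; ring

lemma sum_enum (A : Finset ℕ) (F : ℕ → k) :
    ∑ i ∈ A, F i = ∑ r : Fin A.card, F ((A.orderIsoOfFin rfl r : ℕ)) := by
  rw [← Finset.sum_coe_sort A F]
  exact (Fintype.sum_equiv (A.orderIsoOfFin rfl).toEquiv _ _ (fun r => rfl)).symm

lemma sum_support_to_A {I : Ideal (MvPolynomial (Fin 2) k)} (hI : IsMonomialIdeal I)
    {a b t d j : ℕ} (ha : 0 < a) (hb : 0 < b)
    {p : MvPolynomial (Fin 2) k} (hpI : p ∈ I) (hp : p.IsHomogeneous t)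
    (hja : j < a) (hjb : t + d < j + b) :
    ∑ e ∈ p.support, (if e 0 ≤ j ∧ j ≤ e 0 + d then ((d.choose (j - e 0) : ℕ) : k) else 0)
        * coeff (Ee (e 0) (t - e 0)) p
    = ∑ i ∈ Afin I a b t, (if i ≤ j ∧ j ≤ i + d then ((d.choose (j - i) : ℕ) : k) else 0)
        * coeff (Ee i (t - i)) p := by
  classical
  set F : ℕ → k := fun i =>
    (if i ≤ j ∧ j ≤ i + d then ((d.choose (j - i) : ℕ) : k) else 0) * coeff (Ee i (t - i)) p
    with hF
  have hEsupp : ∀ e ∈ p.support, e = Ee (e 0) (t - e 0) ∧ e 0 ≤ t ∧ e 1 = t - e 0 := by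
    intro e he
    have hdeg : e.degree = t := by
      by_contra h
      exact (mem_support_iff.mp he) (hp.coeff_eq_zero h)
    rw [degree_two] at hdeg
    refine ⟨?_, by omega, by omega⟩
    conv_lhs => rw [eq_Ee e]
    rw [show t - e 0 = e 1 by omega]
  have h1 : ∑ e ∈ p.support, F (e 0) = ∑ i ∈ p.support.image (fun e => e 0), F i := by
    rw [Finset.sum_image]
    intro e he e' he' h
    simp only at h
    rw [(hEsupp e he).1, (hEsupp e' he').1, h]
  have hsub1 : p.support.image (fun e => e 0) ⊆ (p.support.image (fun e => e 0)) ∪ Afin I a b t :=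
    Finset.subset_union_left
  have hsub2 : Afin I a b t ⊆ (p.support.image (fun e => e 0)) ∪ Afin I a b t :=
    Finset.subset_union_right
  have h2 : ∑ i ∈ p.support.image (fun e => e 0), F i
      = ∑ i ∈ (p.support.image (fun e => e 0)) ∪ Afin I a b t, F i := by
    apply Finset.sum_subset hsub1
    intro i _ hi
    have : coeff (Ee i (t - i)) p = 0 := by
      by_contra hc
      apply hi
      rw [Finset.mem_image]
      exact ⟨Ee i (t - i), mem_support_iff.mpr hc, Ee_apply0 i (t - i)⟩
    rw [hF]; simp [this]
  have h3 : ∑ i ∈ (p.support.image (fun e => e 0)) ∪ Afin I a b t, F i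
      = ∑ i ∈ Afin I a b t, F i := by
    apply (Finset.sum_subset hsub2 _).symm
    intro i hiu hiA
    rw [Finset.mem_union] at hiu
    rcases hiu with hiI | hiI
    swap
    · exact absurd hiI hiA
    rw [Finset.mem_image] at hiI
    obtain ⟨e, he, rfl⟩ := hiI
    obtain ⟨heE, he0, he1⟩ := hEsupp e he
    have hmono : monomial (Ee (e 0) (t - e 0)) (1 : k) ∈ I := by
      rw [← heE]; exact monomial_mem_of_mem hI hpI he 1
    have hnot : ¬ (e 0 < a ∧ e 0 ≤ t ∧ t - e 0 < b) := by
      intro hc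
      exact hiA (mem_Afin.mpr ⟨hc.1, hc.2.1, hc.2.2, hmono⟩)
    have : ¬ (e 0 ≤ j ∧ j ≤ e 0 + d) := by omega
    rw [hF]; simp [this]
  rw [h1, h2, h3]

end Assembly

/-- **Theorem (main module theorem).** Let `k` be a field of characteristic zero,
`S = k[x,y]`, `J = (x^a, y^b)` with `a, b ≥ 1`, and `I` a monomial ideal with `J ⊆ I` and
`I/J ≠ 0`. Then `x + y` is a strong Lefschetz element for the graded `S`-module `I/J`;
in particular `I/J` has the strong Lefschetz property. -/
theorem stmt0 {k : Type} [Field k] [CharZero k] (a b : ℕ) (ha : 0 < a) (hb : 0 < b)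
    (I : Ideal (MvPolynomial (Fin 2) k)) (hI : IsMonomialIdeal I)
    (hJI : Ideal.span {(X 0 : MvPolynomial (Fin 2) k) ^ a, X 1 ^ b} ≤ I)
    (hne : I ≠ Ideal.span {(X 0 : MvPolynomial (Fin 2) k) ^ a, X 1 ^ b}) :
    IsSLE (Ideal.span {(X 0 : MvPolynomial (Fin 2) k) ^ a, X 1 ^ b}) I (X 0 + X 1) := by
  classical
  intro d hd t
  set J := Ideal.span {(X 0 : MvPolynomial (Fin 2) k) ^ a, X 1 ^ b} with hJdef
  set rmin := t + 1 - b with hrmin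
  set rmax := min (a - 1) t with hrmax
  set cmin := t + d + 1 - b with hcmin
  set cmax := min (a - 1) (t + d) with hcmax
  set A : Finset ℕ := Afin I a b t with hA
  set B : Finset ℕ := Afin I a b (t + d) with hB
  have hAbound : ∀ i ∈ A, rmin ≤ i ∧ i ≤ rmax := by
    intro i hi
    rw [hA, mem_Afin] at hi
    omega
  have hBbound : ∀ j ∈ B, cmin ≤ j ∧ j ≤ cmax := by
    intro j hj
    rw [hB, mem_Afin] at hj
    omega
  have hup : ∀ i ∈ A, ∀ j, i ≤ j → j ≤ i + d → cmin ≤ j → j ≤ cmax → j ∈ B := by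
    intro i hi j h1 h2 h3 h4
    rw [hA, mem_Afin] at hi
    obtain ⟨hia, hit, hib, himem⟩ := hi
    rw [hB, mem_Afin]
    refine ⟨by omega, by omega, by omega, ?_⟩
    have hexp : Ee i (t - i) + Ee (j - i) ((t + d - j) - (t - i)) = Ee j (t + d - j) := by
      rw [Ee_add]
      congr 1 <;> omega
    have := Ideal.mul_mem_right (monomial (Ee (j - i) ((t + d - j) - (t - i))) (1 : k)) I himem
    rwa [monomial_mul, one_mul, hexp] at this
  by_cases hcase : A.card ≤ B.card
  · -- injectivity branch
    left
    intro m hm hm0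
    obtain ⟨p, hpI, hphom, rfl⟩ := (mem_gradedPiece_iff J I t m).mp hm
    rw [← map_mul] at hm0
    have hker : (X 0 + X 1 : MvPolynomial (Fin 2) k) ^ d * p ∈ J :=
      Ideal.Quotient.eq_zero_iff_mem.mp hm0
    set u : Fin A.card → ℕ := fun r => ((A.orderIsoOfFin rfl) r : ℕ) with hu_def
    have hu : StrictMono u := fun r r' h => by
      exact_mod_cast (A.orderIsoOfFin rfl).strictMono h
    have humem : ∀ r, u r ∈ A := fun r => ((A.orderIsoOfFin rfl) r).2
    have hcardB : B.card ≤ cmax + 1 - cmin := by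
      have hsub : B ⊆ Finset.Icc cmin cmax := fun j hj => Finset.mem_Icc.mpr (hBbound j hj)
      have := Finset.card_le_card hsub
      rwa [Nat.card_Icc] at this
    have hu_lb : ∀ r : Fin A.card, rmin + (r : ℕ) ≤ u r := by
      intro r
      have h0 : (0 : ℕ) < A.card := lt_of_le_of_lt (Nat.zero_le _) r.isLt
      have hg := strictMono_gap hu (r : ℕ) ⟨0, h0⟩ r (by simp)
      have := (hAbound _ (humem ⟨0, h0⟩)).1
      omega
    set φ : Fin A.card → ℕ := fun r => max (u r) (cmin + (r : ℕ)) with hφdef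
    have hφ : StrictMono φ := by
      intro r r' h
      have h' : (r : ℕ) < (r' : ℕ) := h
      exact max_lt_max (hu h) (by omega)
    have hφwin : ∀ r, cmin ≤ φ r ∧ φ r ≤ cmax ∧ u r ≤ φ r ∧ φ r ≤ u r + d := by
      intro r
      have h1 := hAbound _ (humem r)
      have h2 := hu_lb r
      have h3 : (r : ℕ) + 1 ≤ A.card := r.isLt
      have h4 : (r : ℕ) + 1 ≤ B.card := by omega
      simp only [hφdef]
      omega
    have hJchar := (mem_J_iff a b _).mp hker
    have heqn : ∀ s : Fin A.card,
        ∑ r : Fin A.card, ((entryZ d (u r) (φ s) : ℤ) : k)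
          * coeff (Ee (u r) (t - u r)) p = 0 := by
      intro s
      have hw := hφwin s
      have hja : φ s < a := by omega
      have hjb : t + d < φ s + b := by omega
      have hj2 : φ s ≤ t + d := by omega
      have hcoeff0 : coeff (Ee (φ s) (t + d - φ s))
          ((X 0 + X 1 : MvPolynomial (Fin 2) k) ^ d * p) = 0 := by
        by_contra hc
        have := hJchar _ (mem_support_iff.mpr hc)
        rw [Ee_apply0, Ee_apply1] at this
        omega
      rw [coeff_ellpow_mul d t p hphom (φ s) hj2] at hcoeff0
      rw [sum_support_to_A hI ha hb hpI hphom hja hjb] at hcoeff0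
      rw [sum_enum] at hcoeff0
      rw [← hcoeff0]
      apply Finset.sum_congr rfl
      intro r _
      rw [entry_cast]
    have hdetZ : 0 < Matrix.det (Matrix.of fun r s => entryZ d (u r) (φ s)) :=
      (detEntryZ d A.card u φ hu hφ).2 (fun r => ⟨(hφwin r).2.2.1, (hφwin r).2.2.2⟩)
    set Mk : Matrix (Fin A.card) (Fin A.card) k :=
      Matrix.of (fun s r => ((entryZ d (u r) (φ s) : ℤ) : k)) with hMk
    have hdetk : Mk.det ≠ 0 := by
      have htr : Mk = ((Matrix.of fun r s => entryZ d (u r) (φ s)).map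
          ((Int.castRingHom k) : ℤ → k)).transpose := by
        ext s r
        simp [hMk, Matrix.map_apply, Matrix.transpose_apply]
      rw [htr, Matrix.det_transpose]
      have hmapdet := RingHom.map_det (Int.castRingHom k)
        (Matrix.of fun r s => entryZ d (u r) (φ s))
      rw [RingHom.mapMatrix_apply] at hmapdet
      rw [← hmapdet]
      exact Int.cast_ne_zero.mpr (ne_of_gt hdetZ)
    have hinj : Function.Injective Mk.mulVec :=
      Matrix.mulVec_injective_iff_isUnit.mpr
        ((Matrix.isUnit_iff_isUnit_det Mk).mpr (isUnit_iff_ne_zero.mpr hdetk))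
    have hcz : (fun r => coeff (Ee (u r) (t - u r)) p) = (0 : Fin A.card → k) := by
      apply hinj
      rw [Matrix.mulVec_zero]
      funext s
      simp only [Matrix.mulVec, dotProduct, hMk, Matrix.of_apply]
      exact heqn s
    rw [Ideal.Quotient.eq_zero_iff_mem, mem_J_iff]
    intro e he
    by_contra hc
    push_neg at hc
    obtain ⟨hea, heb⟩ := hc
    have hdeg : e.degree = t := by
      by_contra h
      exact (mem_support_iff.mp he) (hphom.coeff_eq_zero h)
    rw [degree_two] at hdeg
    have heE : e = Ee (e 0) (t - e 0) := by
      conv_lhs => rw [eq_Ee e]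
      rw [show t - e 0 = e 1 by omega]
    have hiA : e 0 ∈ A := by
      rw [hA, mem_Afin]
      refine ⟨by omega, by omega, by omega, ?_⟩
      rw [← heE]
      exact monomial_mem_of_mem hI hpI he 1
    set r := (A.orderIsoOfFin rfl).symm ⟨e 0, hiA⟩ with hr
    have hur : u r = e 0 := by
      simp only [hu_def, hr, OrderIso.apply_symm_apply]
    have hz : coeff (Ee (u r) (t - u r)) p = 0 := congrFun hcz r
    rw [hur, ← heE] at hz
    exact (mem_support_iff.mp he) hz
  · -- surjectivity branch
    right
    push_neg at hcase
    intro m' hm'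
    obtain ⟨q, hqI, hqhom, rfl⟩ := (mem_gradedPiece_iff J I (t + d) m').mp hm'
    set v : Fin B.card → ℕ := fun r => ((B.orderIsoOfFin rfl) r : ℕ) with hv_def
    have hv : StrictMono v := fun r r' h => by
      exact_mod_cast (B.orderIsoOfFin rfl).strictMono h
    have hvmem : ∀ r, v r ∈ B := fun r => ((B.orderIsoOfFin rfl) r).2
    have hHall : ∀ r s : Fin B.card, r ≤ s → (s : ℕ) - (r : ℕ) + 1 ≤
        (A.filter (fun x => v r - d ≤ x ∧ x ≤ v s)).card := by
      intro r s hrs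
      have hw0 := hvmem r
      have hw1 := hvmem s
      have hvrs : v r ≤ v s := hv.monotone hrs
      have hBwin : (s : ℕ) - (r : ℕ) + 1 ≤
          (B.filter (fun j => v r ≤ j ∧ j ≤ v s)).card := by
        have hinj := Finset.card_le_card_of_injOn
          (f := fun x : ℕ => if hx : x < B.card then v ⟨x, hx⟩ else 0)
          (s := Finset.Icc (r : ℕ) (s : ℕ))
          (t := B.filter (fun j => v r ≤ j ∧ j ≤ v s)) ?_ ?_
        · rw [Nat.card_Icc] at hinj
          omega
        · intro x hx
          rw [Finset.mem_coe, Finset.mem_Icc] at hx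
          have hxlt : x < B.card := lt_of_le_of_lt hx.2 s.isLt
          simp only [dif_pos hxlt, Finset.mem_coe, Finset.mem_filter]
          refine ⟨hvmem ⟨x, hxlt⟩, hv.monotone ?_, hv.monotone ?_⟩
          · exact hx.1
          · exact hx.2
        · intro x hx y hy hxy
          rw [Finset.mem_coe, Finset.mem_Icc] at hx hy
          have hxlt : x < B.card := lt_of_le_of_lt hx.2 s.isLt
          have hylt : y < B.card := lt_of_le_of_lt hy.2 s.isLt
          simp only [dif_pos hxlt, dif_pos hylt] at hxy
          have := hv.injective hxy
          exact congrArg Fin.val this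
      have hstar := star_count A B d cmin cmax (fun j hj => (hBbound j hj).1)
        (fun j hj => (hBbound j hj).2)
        (fun i hi => le_trans (hAbound i hi).2 (by omega))
        (fun i hi => by have := (hAbound i hi).1; omega)
        hup (le_of_lt hcase) (v r) (v s) hw0 hw1 hvrs
      have hfeq : A.filter (fun i => v r ≤ i + d ∧ i ≤ v s)
          = A.filter (fun x => v r - d ≤ x ∧ x ≤ v s) := by
        apply Finset.filter_congr
        intro x _
        constructor
        · intro h; exact ⟨by omega, h.2⟩
        · intro h; exact ⟨by omega, h.2⟩
      rw [hfeq] at hstar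
      omega
    obtain ⟨ψ, hψm, hψ⟩ := interval_matching B.card A (fun r => v r - d) v
      (fun r s hrs => Nat.sub_le_sub_right (hv.monotone hrs) d) hHall
    have hψA : ∀ r, ψ r ∈ A := fun r => (hψ r).1
    have hψfacts : ∀ r, ψ r < a ∧ ψ r ≤ t ∧ t - ψ r < b
        ∧ monomial (Ee (ψ r) (t - ψ r)) (1 : k) ∈ I := by
      intro r
      have := hψA r
      rw [hA, mem_Afin] at this
      exact this
    have hband : ∀ r, ψ r ≤ v r ∧ v r ≤ ψ r + d := by
      intro r
      have h1 := (hψ r).2.1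
      have h2 := (hψ r).2.2
      omega
    have hdetZ : 0 < Matrix.det (Matrix.of fun r s => entryZ d (ψ r) (v s)) :=
      (detEntryZ d B.card ψ v hψm hv).2 hband
    set Nk : Matrix (Fin B.card) (Fin B.card) k :=
      Matrix.of (fun s r => ((entryZ d (ψ r) (v s) : ℤ) : k)) with hNk
    have hdetk : Nk.det ≠ 0 := by
      have htr : Nk = ((Matrix.of fun r s => entryZ d (ψ r) (v s)).map
          ((Int.castRingHom k) : ℤ → k)).transpose := by
        ext s r
        simp [hNk, Matrix.map_apply, Matrix.transpose_apply]
      rw [htr, Matrix.det_transpose]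
      have hmapdet := RingHom.map_det (Int.castRingHom k)
        (Matrix.of fun r s => entryZ d (ψ r) (v s))
      rw [RingHom.mapMatrix_apply] at hmapdet
      rw [← hmapdet]
      exact Int.cast_ne_zero.mpr (ne_of_gt hdetZ)
    have hunit : IsUnit Nk.det := isUnit_iff_ne_zero.mpr hdetk
    set wvec : Fin B.card → k := fun s => coeff (Ee (v s) (t + d - v s)) q with hwvec
    set cvec : Fin B.card → k := Nk⁻¹.mulVec wvec with hcvec
    have hsolve : Nk.mulVec cvec = wvec := by
      rw [hcvec, Matrix.mulVec_mulVec, Matrix.mul_nonsing_inv _ hunit, Matrix.one_mulVec]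
    set p : MvPolynomial (Fin 2) k :=
      ∑ r : Fin B.card, monomial (Ee (ψ r) (t - ψ r)) (cvec r) with hp_def
    have hpI : p ∈ I := by
      rw [hp_def]
      exact Submodule.sum_mem _ (fun r _ => monomial_smul_mem (hψfacts r).2.2.2 (cvec r))
    have hphom : p.IsHomogeneous t := by
      rw [hp_def]
      apply IsHomogeneous.sum
      intro r _
      apply isHomogeneous_monomial
      rw [Ee_degree]
      have := (hψfacts r).2.1
      omega
    refine ⟨Ideal.Quotient.mk J p, (mem_gradedPiece_iff J I t _).mpr ⟨p, hpI, hphom, rfl⟩, ?_⟩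
    rw [← map_mul, Ideal.Quotient.eq, mem_J_iff]
    intro e he
    by_contra hc
    push_neg at hc
    obtain ⟨hea, heb⟩ := hc
    have hellhom : ((X 0 + X 1 : MvPolynomial (Fin 2) k) ^ d * p).IsHomogeneous (t + d) := by
      have h1 : (X 0 + X 1 : MvPolynomial (Fin 2) k).IsHomogeneous 1 :=
        (isHomogeneous_X _ _).add (isHomogeneous_X _ _)
      have h2 : ((X 0 + X 1 : MvPolynomial (Fin 2) k) ^ d).IsHomogeneous d := by
        have := h1.pow d
        simpa using this
      have := h2.mul hphom
      rwa [Nat.add_comm d t] at this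
    have hdiffhom : (((X 0 + X 1 : MvPolynomial (Fin 2) k) ^ d * p) - q).IsHomogeneous (t + d) := by
      rw [← mem_homogeneousSubmodule _ _]
      exact Submodule.sub_mem _ ((mem_homogeneousSubmodule _ _).mpr hellhom)
        ((mem_homogeneousSubmodule _ _).mpr hqhom)
    have hdeg : e.degree = t + d := by
      by_contra h
      exact (mem_support_iff.mp he) (hdiffhom.coeff_eq_zero h)
    rw [degree_two] at hdeg
    have heE : e = Ee (e 0) (t + d - e 0) := by
      conv_lhs => rw [eq_Ee e]
      rw [show t + d - e 0 = e 1 by omega]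
    have hj1 : e 0 < a := hea
    have hj2 : e 0 ≤ t + d := by omega
    have hjwin : cmin ≤ e 0 ∧ e 0 ≤ cmax := by omega
    have hcoeffp : coeff (Ee (e 0) (t + d - e 0))
        ((X 0 + X 1 : MvPolynomial (Fin 2) k) ^ d * p)
        = ∑ r : Fin B.card, (if ψ r ≤ e 0 ∧ e 0 ≤ ψ r + d
            then ((d.choose (e 0 - ψ r) : ℕ) : k) else 0) * cvec r := by
      rw [hp_def, Finset.mul_sum, coeff_sum]
      apply Finset.sum_congr rfl
      intro r _
      exact coeff_ellpow_mul_monomial d t (ψ r) (e 0) (hψfacts r).2.1 hj2 (cvec r)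
    have hcoeffne : coeff e (((X 0 + X 1 : MvPolynomial (Fin 2) k) ^ d * p) - q) ≠ 0 :=
      mem_support_iff.mp he
    rw [coeff_sub] at hcoeffne
    apply hcoeffne
    by_cases hjB : e 0 ∈ B
    · set s := (B.orderIsoOfFin rfl).symm ⟨e 0, hjB⟩ with hs
      have hvs : v s = e 0 := by
        simp only [hv_def, hs, OrderIso.apply_symm_apply]
      have hmv : (Nk.mulVec cvec) s = wvec s := congrFun hsolve s
      have hmv2 : ∑ r : Fin B.card, ((entryZ d (ψ r) (v s) : ℤ) : k) * cvec r = wvec s := by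
        rw [← hmv]
        simp only [Matrix.mulVec, dotProduct, hNk, Matrix.of_apply]
      rw [heE, hcoeffp]
      have : ∑ r : Fin B.card, (if ψ r ≤ e 0 ∧ e 0 ≤ ψ r + d
          then ((d.choose (e 0 - ψ r) : ℕ) : k) else 0) * cvec r
          = ∑ r : Fin B.card, ((entryZ d (ψ r) (v s) : ℤ) : k) * cvec r := by
        apply Finset.sum_congr rfl
        intro r _
        rw [hvs, entry_cast]
      have hws : wvec s = coeff (Ee (e 0) (t + d - e 0)) q := by
        simp only [hwvec]
        rw [hvs]
      rw [this, hmv2, hws]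
      ring
    · have hq0 : coeff e q = 0 := by
        by_contra hqc
        apply hjB
        rw [hB, mem_Afin]
        refine ⟨hea, by omega, by omega, ?_⟩
        rw [← heE]
        exact monomial_mem_of_mem hI hqI (mem_support_iff.mpr hqc) 1
      have hsum0 : ∑ r : Fin B.card, (if ψ r ≤ e 0 ∧ e 0 ≤ ψ r + d
          then ((d.choose (e 0 - ψ r) : ℕ) : k) else 0) * cvec r = 0 := by
        apply Finset.sum_eq_zero
        intro r _
        rw [if_neg]
        · ring
        · intro hcond
          exact hjB (hup (ψ r) (hψA r) (e 0) hcond.1 hcond.2 hjwin.1 hjwin.2)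
      rw [heE, hcoeffp, hsum0, ← heE, hq0]
      ring
end

section
/- Let a_1 < a_2 < ⋯ < a_m be nonnegative integers and b_1 < b_2 < ⋯ < b_m be integers, and let M = (m_{ij}) be the m × m matrix with entries m_{ij} = C(a_i, b_j), where the binomial coefficient C(a, b) is taken to be 0 when b < 0 or b > a. Then det(M) ≥ 0, and det(M) > 0 if and only if 0 ≤ b_i ≤ a_i for every i. -/
/-- The `m × m` matrix of binomial coefficients `C(aᵢ, bⱼ)` over `ℚ`, with the convention
that `C(a, b) = 0` whenever `b < 0` (and automatically `C(a, b) = 0` when `b > a`). -/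
noncomputable def binomMatrix (m : ℕ) (a : Fin m → ℕ) (b : Fin m → ℤ) :
    Matrix (Fin m) (Fin m) ℚ :=
  Matrix.of fun i j => if 0 ≤ b j then ((a i).choose (b j).toNat : ℚ) else 0

/-- Transposed binomial matrix with natural column data: row index `j` (columns `c`),
column index `i` (rows `a`). -/
noncomputable def TM (m : ℕ) (a c : Fin m → ℕ) : Matrix (Fin m) (Fin m) ℚ :=
  Matrix.of fun j i => ((a i).choose (c j) : ℚ)

lemma fin_two_cases (t : Fin 2) : t = 0 ∨ t = 1 := by fin_cases t <;> simp

lemma fin_le_of_strictMono {m : ℕ} {c : Fin m → ℕ} (hc : StrictMono c) (j : Fin m) :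
    (j : ℕ) ≤ c j := by
  have H : ∀ k (hk : k < m), k ≤ c ⟨k, hk⟩ := by
    intro k
    induction k with
    | zero => intro hk; exact Nat.zero_le _
    | succ k ih =>
      intro hk
      have hk' : k < m := by omega
      have h1 := ih hk'
      have h2 : c ⟨k, hk'⟩ < c ⟨k + 1, hk⟩ := hc (by simp [Fin.lt_def])
      omega
  have := H j.1 j.2
  simpa using this

lemma tm_det_eq_zero {m : ℕ} {a c : Fin m → ℕ} (ha : Monotone a) (hc : Monotone c)
    (i0 : Fin m) (h : a i0 < c i0) : (TM m a c).det = 0 := by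
  rw [Matrix.det_apply]
  apply Finset.sum_eq_zero
  intro σ _
  have hex : ∃ x ∈ Finset.Iic i0, i0 ≤ σ x := by
    by_contra hcon
    push_neg at hcon
    have hsub : (Finset.Iic i0).image σ ⊆ Finset.Iio i0 := by
      intro y hy
      simp only [Finset.mem_image] at hy
      obtain ⟨x, hx, rfl⟩ := hy
      exact Finset.mem_Iio.mpr (hcon x hx)
    have h1 := Finset.card_le_card hsub
    rw [Finset.card_image_of_injective _ σ.injective, Fin.card_Iic, Fin.card_Iio] at h1
    omega
  obtain ⟨x, hx, hσx⟩ := hex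
  have hzero : TM m a c (σ x) x = 0 := by
    have hax : a x ≤ a i0 := ha (Finset.mem_Iic.mp hx)
    have hcx : c i0 ≤ c (σ x) := hc hσx
    have hlt : a x < c (σ x) := by omega
    show ((a x).choose (c (σ x)) : ℚ) = 0
    simp [Nat.choose_eq_zero_of_lt hlt]
  have hprod : (∏ i, TM m a c (σ i) i) = 0 := Finset.prod_eq_zero (Finset.mem_univ x) hzero
  rw [hprod, smul_zero]

lemma choose_cast_pascal (n k : ℕ) (hn : 1 ≤ n) :
    ((n.choose k : ℚ)) = ((n - 1).choose k : ℚ) +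
      (if k = 0 then 0 else ((n - 1).choose (k - 1) : ℚ)) := by
  obtain ⟨n', rfl⟩ : ∃ n', n = n' + 1 := ⟨n - 1, by omega⟩
  cases k with
  | zero => simp
  | succ k =>
    simp only [Nat.add_sub_cancel, Nat.succ_ne_zero, if_neg, Nat.succ_sub_one]
    rw [Nat.choose_succ_succ]
    push_cast
    ring

lemma tm_key : ∀ (n m : ℕ) (a c : Fin m → ℕ), (∑ i, a i) + m ≤ n → StrictMono a →
    StrictMono c →
    0 ≤ (TM m a c).det ∧ ((∀ i, c i ≤ a i) → 0 < (TM m a c).det) := by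
  intro n
  induction n using Nat.strong_induction_on with
  | _ n IH =>
    intro m a c hn ha hc
    cases m with
    | zero =>
      refine ⟨?_, fun _ => ?_⟩ <;> · rw [Matrix.det_fin_zero]; norm_num
    | succ k =>
      by_cases h0 : a 0 = 0
      · by_cases hc0 : c 0 = 0
        · -- expand along column 0 of TM
          have hdet : (TM (k + 1) a c).det = (TM k (a ∘ Fin.succ) (c ∘ Fin.succ)).det := by
            rw [Matrix.det_succ_column_zero, Finset.sum_eq_single 0]
            · have h00 : TM (k + 1) a c 0 0 = 1 := by
                show ((a 0).choose (c 0) : ℚ) = 1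
                simp [h0, hc0]
              have hsub : (TM (k + 1) a c).submatrix (Fin.succAbove 0) Fin.succ =
                  TM k (a ∘ Fin.succ) (c ∘ Fin.succ) := by
                ext j i
                simp [TM, Matrix.submatrix_apply, Fin.zero_succAbove, Function.comp]
              rw [h00, hsub]
              simp
            · intro i _ hi
              have h0i : (0 : Fin (k + 1)) < i := Fin.pos_of_ne_zero hi
              have hci : 0 < c i := by
                have := hc h0i
                omega
              have hz : TM (k + 1) a c i 0 = 0 := by
                show ((a 0).choose (c i) : ℚ) = 0
                have hlt : a 0 < c i := by omega
                simp [Nat.choose_eq_zero_of_lt hlt]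
              rw [hz]
              ring
            · intro h; exact absurd (Finset.mem_univ _) h
          have hsum : ∑ i : Fin k, (a ∘ Fin.succ) i + k < n := by
            have hs : ∑ i : Fin (k + 1), a i = a 0 + ∑ i : Fin k, a (Fin.succ i) :=
              Fin.sum_univ_succ a
            simp only [Function.comp]
            omega
          obtain ⟨H1, H2⟩ := IH (∑ i : Fin k, (a ∘ Fin.succ) i + k) hsum k
            (a ∘ Fin.succ) (c ∘ Fin.succ) le_rfl
            (ha.comp Fin.strictMono_succ) (hc.comp Fin.strictMono_succ)
          refine ⟨by rw [hdet]; exact H1, fun h => by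
            rw [hdet]; exact H2 (fun i => h (Fin.succ i))⟩
        · have hz : (TM (k + 1) a c).det = 0 :=
            tm_det_eq_zero ha.monotone hc.monotone 0 (by omega)
          refine ⟨le_of_eq hz.symm, fun h => ?_⟩
          have := h 0
          omega
      · -- a 0 ≥ 1 : Pascal recursion on all rows of TM
        have hapos : ∀ i, 1 ≤ a i := by
          intro i
          have := ha.monotone (Fin.zero_le i)
          omega
        set a' : Fin (k + 1) → ℕ := fun i => a i - 1 with ha'def
        have ha's : StrictMono a' := by
          intro i j hij
          have h1 := ha hij
          have h2 := hapos i
          simp only [ha'def]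
          omega
        have hsumeq : (∑ i, a' i) + (k + 1) = ∑ i : Fin (k + 1), a i := by
          have h1 : ∀ i : Fin (k + 1), a i = a' i + 1 := by
            intro i; have := hapos i; simp only [ha'def]; omega
          calc (∑ i, a' i) + (k + 1) = ∑ i : Fin (k + 1), (a' i + 1) := by
                rw [Finset.sum_add_distrib]
                simp
            _ = ∑ i, a i := Finset.sum_congr rfl (fun i _ => (h1 i).symm)
        have hltn : (∑ i, a' i) + (k + 1) < n := by omega
        set g : Fin (k + 1) → Fin 2 → (Fin (k + 1) → ℚ) := fun j t =>
          if t = 0 then (fun i => ((a' i).choose (c j) : ℚ))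
          else if c j = 0 then 0 else (fun i => ((a' i).choose (c j - 1) : ℚ)) with hgdef
        have hrow : ∀ j, (fun i => ((a i).choose (c j) : ℚ)) = ∑ t : Fin 2, g j t := by
          intro j
          rw [Fin.sum_univ_two]
          funext i
          rw [Pi.add_apply]
          have hp := choose_cast_pascal (a i) (c j) (hapos i)
          by_cases hcj : c j = 0
          · simp only [hgdef, if_pos rfl, if_neg (show (1 : Fin 2) ≠ 0 by decide),
              if_pos hcj, ha'def, Pi.zero_apply]
            simpa [hcj] using hp
          · simp only [hgdef, if_pos rfl, if_neg (show (1 : Fin 2) ≠ 0 by decide),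
              if_neg hcj, ha'def]
            simpa [hcj] using hp
        have hdet : (TM (k + 1) a c).det =
            ∑ r : Fin (k + 1) → Fin 2, (Matrix.of fun j => g j (r j)).det := by
          have h1 : TM (k + 1) a c = Matrix.of fun j => ∑ t : Fin 2, g j t := by
            ext j i
            have := congrFun (hrow j) i
            simpa [TM] using this
          rw [h1]
          show (Matrix.detRowAlternating (R := ℚ)
            (n := Fin (k + 1))).toMultilinearMap (fun j => ∑ t : Fin 2, g j t) = _
          rw [MultilinearMap.map_sum]
          rfl
        have hterm : ∀ r : Fin (k + 1) → Fin 2, (∀ j, r j = 1 → c j ≠ 0) →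
            (Matrix.of fun j => g j (r j)) = TM (k + 1) a' (fun j => c j - (r j : ℕ)) := by
          intro r hgood
          ext j i
          show g j (r j) i = ((a' i).choose (c j - (r j : ℕ)) : ℚ)
          rcases fin_two_cases (r j) with h | h
          · rw [h]
            simp [hgdef]
          · rw [h]
            simp [hgdef, hgood j h, if_neg (show (1 : Fin 2) ≠ 0 by decide)]
        have hnn : ∀ r : Fin (k + 1) → Fin 2, 0 ≤ (Matrix.of fun j => g j (r j)).det := by
          intro r
          by_cases hbad : ∃ j, r j = 1 ∧ c j = 0
          · obtain ⟨j, hj1, hj0⟩ := hbad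
            have hz : (Matrix.of fun j => g j (r j)).det = 0 := by
              apply Matrix.det_eq_zero_of_row_eq_zero j
              intro i
              show g j (r j) i = 0
              rw [hj1]
              simp [hgdef, hj0, if_neg (show (1 : Fin 2) ≠ 0 by decide)]
            rw [hz]
          · push_neg at hbad
            have hgood : ∀ j, r j = 1 → c j ≠ 0 := fun j hj => hbad j hj
            rw [hterm r hgood]
            set cr : Fin (k + 1) → ℕ := fun j => c j - (r j : ℕ) with hcrdef
            by_cases hinj : Function.Injective cr
            · have hmono : Monotone cr := by
                intro x y hxy
                rcases eq_or_lt_of_le hxy with rfl | hlt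
                · exact le_rfl
                · have h1 := hc hlt
                  have h2 := (r x).isLt
                  have h3 := (r y).isLt
                  simp only [hcrdef]
                  omega
              have hsm : StrictMono cr := hmono.strictMono_of_injective hinj
              exact (IH _ hltn (k + 1) a' cr le_rfl ha's hsm).1
            · have hex : ∃ x y, x ≠ y ∧ cr x = cr y := by
                unfold Function.Injective at hinj
                push_neg at hinj
                obtain ⟨x, y, hxy, hne⟩ := hinj
                exact ⟨x, y, hne, hxy⟩
              obtain ⟨x, y, hne, hxy⟩ := hex
              have hz : (TM (k + 1) a' cr).det = 0 := by
                apply Matrix.det_zero_of_row_eq hne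
                show (fun i => ((a' i).choose (cr x) : ℚ)) =
                  fun i => ((a' i).choose (cr y) : ℚ)
                rw [hxy]
              rw [hz]
        refine ⟨?_, ?_⟩
        · rw [hdet]
          exact Finset.sum_nonneg (fun r _ => hnn r)
        · intro hca
          rw [hdet]
          set rs : Fin (k + 1) → Fin 2 := fun j => if (j : ℕ) < c j then 1 else 0 with hrsdef
          have hrsgood : ∀ j, rs j = 1 → c j ≠ 0 := by
            intro j hj
            by_contra hc0
            simp only [hrsdef] at hj
            rw [if_neg (by omega)] at hj
            exact absurd hj (by decide)
          have hcrs : ∀ j : Fin (k + 1),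
              c j - ((rs j : ℕ)) = if (j : ℕ) < c j then c j - 1 else c j := by
            intro j
            simp only [hrsdef]
            split_ifs <;> simp
          apply Finset.sum_pos' (fun r _ => hnn r)
          refine ⟨rs, Finset.mem_univ _, ?_⟩
          rw [hterm rs hrsgood]
          set cs : Fin (k + 1) → ℕ := fun j => c j - (rs j : ℕ) with hcsdef
          have hjc : ∀ j : Fin (k + 1), (j : ℕ) ≤ c j := fin_le_of_strictMono hc
          have hcss : StrictMono cs := by
            rw [Fin.strictMono_iff_lt_succ]
            intro i
            have h1 := hc (Fin.castSucc_lt_succ : Fin.castSucc i < Fin.succ i)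
            have h2 := hjc (Fin.castSucc i)
            have h3 := hjc (Fin.succ i)
            have e1 := hcrs (Fin.castSucc i)
            have e2 := hcrs (Fin.succ i)
            simp only [hcsdef]
            rw [e1, e2]
            simp only [Fin.coe_castSucc, Fin.val_succ] at *
            split_ifs <;> omega
          have hcsle : ∀ j, cs j ≤ a' j := by
            intro j
            have h2 := hjc j
            have h3 := hca j
            have h4 : (j : ℕ) ≤ a' j := fin_le_of_strictMono ha's j
            have h5 : a j = a' j + 1 := by
              have := hapos j
              simp only [ha'def]
              omega
            simp only [hcsdef]
            rw [hcrs j]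
            split_ifs <;> omega
          exact (IH _ hltn (k + 1) a' cs le_rfl ha's hcss).2 hcsle

/-- **Corollary (Gessel–Viennot).** Let `a₁ < a₂ < ⋯ < aₘ` be nonnegative integers and
`b₁ < b₂ < ⋯ < bₘ` integers. The determinant of the matrix `(C(aᵢ, bⱼ))` of binomial
coefficients is nonnegative, and it is positive if and only if `0 ≤ bᵢ ≤ aᵢ` for every `i`
(i.e. `C(aᵢ, bᵢ) ≠ 0` for each `i`). -/
theorem stmt13 (m : ℕ) (a : Fin m → ℕ) (b : Fin m → ℤ)
    (ha : StrictMono a) (hb : StrictMono b) :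
    0 ≤ (binomMatrix m a b).det ∧
      (0 < (binomMatrix m a b).det ↔ ∀ i, 0 ≤ b i ∧ b i ≤ (a i : ℤ)) := by
  by_cases hneg : ∃ j, b j < 0
  · obtain ⟨j, hj⟩ := hneg
    have hz : (binomMatrix m a b).det = 0 := by
      apply Matrix.det_eq_zero_of_column_eq_zero j
      intro i
      simp [binomMatrix, not_le.mpr hj]
    refine ⟨le_of_eq hz.symm, ?_⟩
    constructor
    · intro h
      rw [hz] at h
      exact absurd h (lt_irrefl 0)
    · intro hall
      exact absurd ((hall j).1) (not_le.mpr hj)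
  · push_neg at hneg
    have hpos : ∀ j, 0 ≤ b j := fun j => hneg j
    set c : Fin m → ℕ := fun j => (b j).toNat with hcdef
    have hcs : StrictMono c := by
      intro i j hij
      have h1 := hb hij
      have h2 := hpos i
      simp only [hcdef]
      omega
    have hM : (binomMatrix m a b).det = (TM m a c).det := by
      rw [← Matrix.det_transpose (TM m a c)]
      congr 1
      ext i j
      simp [binomMatrix, TM, Matrix.transpose_apply, hpos j, hcdef]
    obtain ⟨H1, H2⟩ := tm_key ((∑ i, a i) + m) m a c le_rfl ha hcs
    refine ⟨by rw [hM]; exact H1, ?_⟩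
    constructor
    · intro hlt i
      refine ⟨hpos i, ?_⟩
      by_contra hgt
      push_neg at hgt
      have hlt2 : a i < c i := by
        simp only [hcdef]
        omega
      rw [hM, tm_det_eq_zero ha.monotone hcs.monotone i hlt2] at hlt
      exact absurd hlt (lt_irrefl 0)
    · intro hall
      rw [hM]
      refine H2 (fun i => ?_)
      have h1 := (hall i).2
      simp only [hcdef]
      omega
end

section
/- Let k be a field of characteristic zero, S = k[x,y,z], I = (x^2, y^2, z^2) and J = (x^3, y^3, z^3). Then the graded S-module M = I/J satisfies dim_k M_3 = dim_k M_4, and the multiplication map ×(x+y+z) : M_3 → M_4 has nontrivial kernel (it kills the class of x^2(y−z) + y^2(z−x) + z^2(x−y)); consequently M does not have the weak Lefschetz property (and hence not the strong Lefschetz property). -/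
open MvPolynomial

/-- `ℓ` is a weak Lefschetz element for the graded module `I/J`. -/
def IsWLE {k : Type} [Field k] {n : ℕ} (J I : Ideal (MvPolynomial (Fin n) k))
    (ℓ : MvPolynomial (Fin n) k) : Prop :=
  ∀ i : ℕ,
    (∀ m ∈ gradedPiece J I i, Ideal.Quotient.mk J ℓ * m = 0 → m = 0) ∨
    (∀ m' ∈ gradedPiece J I (i + 1), ∃ m ∈ gradedPiece J I i,
      Ideal.Quotient.mk J ℓ * m = m')

/-- The graded module `I/J` has the strong Lefschetz property. -/
def HasSLP {k : Type} [Field k] {n : ℕ} (J I : Ideal (MvPolynomial (Fin n) k)) : Prop :=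
  ∃ ℓ ∈ homogeneousSubmodule (Fin n) k 1, IsSLE J I ℓ

/-- The graded module `I/J` has the weak Lefschetz property. -/
def HasWLP {k : Type} [Field k] {n : ℕ} (J I : Ideal (MvPolynomial (Fin n) k)) : Prop :=
  ∃ ℓ ∈ homogeneousSubmodule (Fin n) k 1, IsWLE J I ℓ
section Aux

variable {k : Type} [Field k]

abbrev S3 (k : Type) [Field k] := MvPolynomial (Fin 3) k

/-- The cube ideal `J = (x³,y³,z³)`. -/
noncomputable def Jc (k : Type) [Field k] : Ideal (S3 k) :=
  Ideal.span {X 0 ^ 3, X 1 ^ 3, X 2 ^ 3}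

/-- The square ideal `I = (x²,y²,z²)`. -/
noncomputable def Ic (k : Type) [Field k] : Ideal (S3 k) :=
  Ideal.span {X 0 ^ 2, X 1 ^ 2, X 2 ^ 2}

noncomputable def mon (i j l : ℕ) : Fin 3 →₀ ℕ :=
  Finsupp.single 0 i + Finsupp.single 1 j + Finsupp.single 2 l

lemma mon_apply0 (i j l : ℕ) : mon i j l 0 = i := by
  simp [mon, Finsupp.single_apply]
lemma mon_apply1 (i j l : ℕ) : mon i j l 1 = j := by
  simp [mon, Finsupp.single_apply]
lemma mon_apply2 (i j l : ℕ) : mon i j l 2 = l := by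
  simp [mon, Finsupp.single_apply]

lemma eq_mon (m : Fin 3 →₀ ℕ) : m = mon (m 0) (m 1) (m 2) := by
  ext i
  fin_cases i <;> simp [mon_apply0, mon_apply1, mon_apply2]

lemma mon_eq_mon_iff {i j l i' j' l' : ℕ} :
    mon i j l = mon i' j' l' ↔ i = i' ∧ j = j' ∧ l = l' := by
  constructor
  · intro h
    exact ⟨by simpa [mon_apply0] using congrArg (fun f => f 0) h,
      by simpa [mon_apply1] using congrArg (fun f => f 1) h,
      by simpa [mon_apply2] using congrArg (fun f => f 2) h⟩
  · rintro ⟨rfl, rfl, rfl⟩; rfl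

lemma mon_degree (i j l : ℕ) : (mon i j l).degree = i + j + l := by
  rw [Finsupp.degree_apply, Finset.sum_subset (Finset.subset_univ _) (by intro s _ h; simpa using h)]
  simp [Fin.sum_univ_three, mon_apply0, mon_apply1, mon_apply2]

lemma degree_eq_sum3 (m : Fin 3 →₀ ℕ) : m.degree = m 0 + m 1 + m 2 := by
  conv_lhs => rw [eq_mon m]
  rw [mon_degree]

lemma monomial_mon (c : k) (i j l : ℕ) :
    (monomial (mon i j l) c : S3 k) = C c * (X 0 ^ i * X 1 ^ j * X 2 ^ l) := by
  rw [X_pow_eq_monomial, X_pow_eq_monomial, X_pow_eq_monomial, monomial_mul, monomial_mul]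
  rw [show (C c : S3 k) = monomial 0 c by simp, monomial_mul]
  simp [mon]

lemma coeff_mon_mon (c : k) (i j l i' j' l' : ℕ) :
    coeff (mon i j l) (monomial (mon i' j' l') c : S3 k)
      = if i' = i ∧ j' = j ∧ l' = l then c else 0 := by
  rw [coeff_monomial]
  by_cases h : i' = i ∧ j' = j ∧ l' = l
  · rw [if_pos h, if_pos (mon_eq_mon_iff.2 h)]
  · rw [if_neg h, if_neg (fun hh => h (mon_eq_mon_iff.1 hh))]

lemma coeff_CXmul (a : k) (s : Fin 3) (p : S3 k) (m : Fin 3 →₀ ℕ) :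
    coeff m (C a * X s * p) =
      a * (if m s ≠ 0 then coeff (m - Finsupp.single s 1) p else 0) := by
  rw [show C a * X s * p = C a * (p * X s) by ring, coeff_C_mul, coeff_mul_X']
  simp [Finsupp.mem_support_iff]

lemma mon_sub0 (i j l : ℕ) : mon i j l - Finsupp.single 0 1 = mon (i - 1) j l := by
  ext s; fin_cases s <;>
    simp [Finsupp.sub_apply, mon_apply0, mon_apply1, mon_apply2, Finsupp.single_apply]
lemma mon_sub1 (i j l : ℕ) : mon i j l - Finsupp.single 1 1 = mon i (j - 1) l := by
  ext s; fin_cases s <;>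
    simp [Finsupp.sub_apply, mon_apply0, mon_apply1, mon_apply2, Finsupp.single_apply]
lemma mon_sub2 (i j l : ℕ) : mon i j l - Finsupp.single 2 1 = mon i j (l - 1) := by
  ext s; fin_cases s <;>
    simp [Finsupp.sub_apply, mon_apply0, mon_apply1, mon_apply2, Finsupp.single_apply]

lemma mem_span3 {f g h p : S3 k} (hp : p ∈ Ideal.span {f, g, h}) :
    ∃ A B C : S3 k, p = A * f + B * g + C * h := by
  rw [Ideal.mem_span_insert] at hp
  obtain ⟨A, z, hz, rfl⟩ := hp
  rw [Ideal.mem_span_insert] at hz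
  obtain ⟨B, w, hw, rfl⟩ := hz
  rw [Ideal.mem_span_singleton] at hw
  obtain ⟨C, rfl⟩ := hw
  exact ⟨A, B, C, by ring⟩

lemma memJ3 (q1 q2 q3 : S3 k) : q1 * X 0 ^ 3 + q2 * X 1 ^ 3 + q3 * X 2 ^ 3 ∈ Jc k := by
  refine add_mem (add_mem ?_ ?_) ?_ <;>
    exact Ideal.mul_mem_left _ _ (Ideal.subset_span (by simp))

lemma memI2 (q1 q2 q3 : S3 k) : q1 * X 0 ^ 2 + q2 * X 1 ^ 2 + q3 * X 2 ^ 2 ∈ Ic k := by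
  refine add_mem (add_mem ?_ ?_) ?_ <;>
    exact Ideal.mul_mem_left _ _ (Ideal.subset_span (by simp))

lemma coeff_cubes {p : S3 k} (hp : p ∈ Jc k)
    (m : Fin 3 →₀ ℕ) (h0 : m 0 < 3) (h1 : m 1 < 3) (h2 : m 2 < 3) :
    coeff m p = 0 := by
  obtain ⟨A, B, C, rfl⟩ := mem_span3 hp
  rw [X_pow_eq_monomial, X_pow_eq_monomial, X_pow_eq_monomial]
  simp only [coeff_add, coeff_mul_monomial', Finsupp.single_le_iff]
  rw [if_neg (by omega), if_neg (by omega), if_neg (by omega)]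
  ring

lemma coeff_squares {p : S3 k} (hp : p ∈ Ic k)
    (m : Fin 3 →₀ ℕ) (h0 : m 0 < 2) (h1 : m 1 < 2) (h2 : m 2 < 2) :
    coeff m p = 0 := by
  obtain ⟨A, B, C, rfl⟩ := mem_span3 hp
  rw [X_pow_eq_monomial, X_pow_eq_monomial, X_pow_eq_monomial]
  simp only [coeff_add, coeff_mul_monomial', Finsupp.single_le_iff]
  rw [if_neg (by omega), if_neg (by omega), if_neg (by omega)]
  ring

lemma monJ {i j l : ℕ} (c : k) (h : 3 ≤ i ∨ 3 ≤ j ∨ 3 ≤ l) :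
    (monomial (mon i j l) c : S3 k) ∈ Jc k := by
  rcases h with h | h | h
  · have : (monomial (mon i j l) c : S3 k)
        = (C c * (X 0 ^ (i - 3) * X 1 ^ j * X 2 ^ l)) * X 0 ^ 3 + 0 * X 1 ^ 3 + 0 * X 2 ^ 3 := by
      rw [monomial_mon]
      conv_lhs => rw [show i = i - 3 + 3 by omega]
      rw [pow_add]; ring
    rw [this]; exact memJ3 _ _ _
  · have : (monomial (mon i j l) c : S3 k)
        = 0 * X 0 ^ 3 + (C c * (X 0 ^ i * X 1 ^ (j - 3) * X 2 ^ l)) * X 1 ^ 3 + 0 * X 2 ^ 3 := by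
      rw [monomial_mon]
      conv_lhs => rw [show j = j - 3 + 3 by omega]
      rw [pow_add]; ring
    rw [this]; exact memJ3 _ _ _
  · have : (monomial (mon i j l) c : S3 k)
        = 0 * X 0 ^ 3 + 0 * X 1 ^ 3 + (C c * (X 0 ^ i * X 1 ^ j * X 2 ^ (l - 3))) * X 2 ^ 3 := by
      rw [monomial_mon]
      conv_lhs => rw [show l = l - 3 + 3 by omega]
      rw [pow_add]; ring
    rw [this]; exact memJ3 _ _ _

lemma monI {i j l : ℕ} (c : k) (h : 2 ≤ i ∨ 2 ≤ j ∨ 2 ≤ l) :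
    (monomial (mon i j l) c : S3 k) ∈ Ic k := by
  rcases h with h | h | h
  · have : (monomial (mon i j l) c : S3 k)
        = (C c * (X 0 ^ (i - 2) * X 1 ^ j * X 2 ^ l)) * X 0 ^ 2 + 0 * X 1 ^ 2 + 0 * X 2 ^ 2 := by
      rw [monomial_mon]
      conv_lhs => rw [show i = i - 2 + 2 by omega]
      rw [pow_add]; ring
    rw [this]; exact memI2 _ _ _
  · have : (monomial (mon i j l) c : S3 k)
        = 0 * X 0 ^ 2 + (C c * (X 0 ^ i * X 1 ^ (j - 2) * X 2 ^ l)) * X 1 ^ 2 + 0 * X 2 ^ 2 := by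
      rw [monomial_mon]
      conv_lhs => rw [show j = j - 2 + 2 by omega]
      rw [pow_add]; ring
    rw [this]; exact memI2 _ _ _
  · have : (monomial (mon i j l) c : S3 k)
        = 0 * X 0 ^ 2 + 0 * X 1 ^ 2 + (C c * (X 0 ^ i * X 1 ^ j * X 2 ^ (l - 2))) * X 2 ^ 2 := by
      rw [monomial_mon]
      conv_lhs => rw [show l = l - 2 + 2 by omega]
      rw [pow_add]; ring
    rw [this]; exact memI2 _ _ _

lemma mem_gradedPiece_intro {p : S3 k} {i : ℕ} (hpI : p ∈ Ic k) (hpH : p.IsHomogeneous i) :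
    Ideal.Quotient.mk (Jc k) p ∈ gradedPiece (Jc k) (Ic k) i := by
  refine ⟨p, ⟨hpI, ?_⟩, rfl⟩
  exact (mem_homogeneousSubmodule i p).2 hpH

lemma mem_gradedPiece_elim {x : S3 k ⧸ Jc k} {i : ℕ}
    (hx : x ∈ gradedPiece (Jc k) (Ic k) i) :
    ∃ p : S3 k, p ∈ Ic k ∧ p.IsHomogeneous i ∧ Ideal.Quotient.mk (Jc k) p = x := by
  obtain ⟨p, ⟨hpI, hpH⟩, rfl⟩ := hx
  exact ⟨p, hpI, (mem_homogeneousSubmodule i p).1 hpH, rfl⟩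

lemma mk_smul (r : k) (q : S3 k) :
    r • Ideal.Quotient.mk (Jc k) q = Ideal.Quotient.mk (Jc k) (C r * q) := by
  rw [C_mul']
  exact ((Ideal.Quotient.mkₐ k (Jc k)).toLinearMap.map_smul r q).symm

lemma mk_mon_ne {i j l : ℕ} (hi : i < 3) (hj : j < 3) (hl : l < 3) :
    Ideal.Quotient.mk (Jc k) (monomial (mon i j l) (1 : k)) ≠ 0 := by
  intro h
  rw [Ideal.Quotient.eq_zero_iff_mem] at h
  have := coeff_cubes h (mon i j l) (by rw [mon_apply0]; omega)
    (by rw [mon_apply1]; omega) (by rw [mon_apply2]; omega)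
  rw [coeff_mon_mon] at this
  simp at this

end Aux
section Span

variable {k : Type} [Field k]

lemma deg3_enum (a b c : ℕ) (h : a + b + c = 3) :
    (a = 3 ∧ b = 0 ∧ c = 0) ∨ (a = 0 ∧ b = 3 ∧ c = 0) ∨
    (a = 0 ∧ b = 0 ∧ c = 3) ∨ (a = 2 ∧ b = 1 ∧ c = 0) ∨
    (a = 2 ∧ b = 0 ∧ c = 1) ∨ (a = 1 ∧ b = 2 ∧ c = 0) ∨
    (a = 0 ∧ b = 2 ∧ c = 1) ∨ (a = 1 ∧ b = 0 ∧ c = 2) ∨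
    (a = 0 ∧ b = 1 ∧ c = 2) ∨ (a = 1 ∧ b = 1 ∧ c = 1) := by
  have h1 : a ≤ 3 := by omega
  have h2 : b ≤ 3 := by omega
  interval_cases a <;> interval_cases b <;> simp_all <;> omega

lemma deg4_enum (a b c : ℕ) (h : a + b + c = 4) :
    (3 ≤ a ∨ 3 ≤ b ∨ 3 ≤ c) ∨
    (a = 2 ∧ b = 2 ∧ c = 0) ∨ (a = 2 ∧ b = 0 ∧ c = 2) ∨
    (a = 0 ∧ b = 2 ∧ c = 2) ∨ (a = 2 ∧ b = 1 ∧ c = 1) ∨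
    (a = 1 ∧ b = 2 ∧ c = 1) ∨ (a = 1 ∧ b = 1 ∧ c = 2) := by
  have h1 : a ≤ 4 := by omega
  have h2 : b ≤ 4 := by omega
  interval_cases a <;> interval_cases b <;> simp_all <;> omega

def E3 : Fin 6 → ℕ × ℕ × ℕ := ![(2,1,0),(2,0,1),(1,2,0),(0,2,1),(1,0,2),(0,1,2)]
def E4 : Fin 6 → ℕ × ℕ × ℕ := ![(2,2,0),(2,0,2),(0,2,2),(2,1,1),(1,2,1),(1,1,2)]

noncomputable def w3 (i : Fin 6) : Fin 3 →₀ ℕ := mon (E3 i).1 (E3 i).2.1 (E3 i).2.2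
noncomputable def w4 (i : Fin 6) : Fin 3 →₀ ℕ := mon (E4 i).1 (E4 i).2.1 (E4 i).2.2

lemma w3_def (i : Fin 6) : w3 i = mon (E3 i).1 (E3 i).2.1 (E3 i).2.2 := rfl
lemma w4_def (i : Fin 6) : w4 i = mon (E4 i).1 (E4 i).2.1 (E4 i).2.2 := rfl

noncomputable def v3 (k : Type) [Field k] : Fin 6 → (S3 k ⧸ Jc k) :=
  fun i => Ideal.Quotient.mk (Jc k) (monomial (w3 i) 1)

noncomputable def v4 (k : Type) [Field k] : Fin 6 → (S3 k ⧸ Jc k) :=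
  fun i => Ideal.Quotient.mk (Jc k) (monomial (w4 i) 1)

lemma smul_v_mem {m : Fin 3 →₀ ℕ} {v : Fin 6 → (S3 k ⧸ Jc k)} (r : k) (i : Fin 6)
    (h : Ideal.Quotient.mk (Jc k) (monomial m (1:k)) = v i) :
    Ideal.Quotient.mk (Jc k) (monomial m r) ∈ Submodule.span k (Set.range v) := by
  have : (monomial m r : S3 k) = C r * monomial m 1 := by rw [C_mul_monomial, mul_one]
  rw [this, ← mk_smul, h]
  exact Submodule.smul_mem _ _ (Submodule.subset_span ⟨i, rfl⟩)

lemma v3_mem (i : Fin 6) : v3 k i ∈ gradedPiece (Jc k) (Ic k) 3 := by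
  refine mem_gradedPiece_intro (monI _ ?_) (isHomogeneous_monomial _ ?_)
  · exact (by decide :
      ∀ j : Fin 6, 2 ≤ (E3 j).1 ∨ 2 ≤ (E3 j).2.1 ∨ 2 ≤ (E3 j).2.2) i
  · rw [w3_def, mon_degree]
    exact (by decide : ∀ j : Fin 6, (E3 j).1 + (E3 j).2.1 + (E3 j).2.2 = 3) i

lemma v4_mem (i : Fin 6) : v4 k i ∈ gradedPiece (Jc k) (Ic k) 4 := by
  refine mem_gradedPiece_intro (monI _ ?_) (isHomogeneous_monomial _ ?_)
  · exact (by decide :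
      ∀ j : Fin 6, 2 ≤ (E4 j).1 ∨ 2 ≤ (E4 j).2.1 ∨ 2 ≤ (E4 j).2.2) i
  · rw [w4_def, mon_degree]
    exact (by decide : ∀ j : Fin 6, (E4 j).1 + (E4 j).2.1 + (E4 j).2.2 = 4) i

lemma gp3_eq : gradedPiece (Jc k) (Ic k) 3 = Submodule.span k (Set.range (v3 k)) := by
  apply le_antisymm
  · rintro x hx
    obtain ⟨p, hpI, hpH, rfl⟩ := mem_gradedPiece_elim hx
    rw [← support_sum_monomial_coeff p, map_sum]
    apply Submodule.sum_mem
    intro m hm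
    have hdeg : m 0 + m 1 + m 2 = 3 := by
      rw [← degree_eq_sum3]
      by_contra h
      exact (mem_support_iff.1 hm) (hpH.coeff_eq_zero h)
    have hmon := eq_mon m
    rcases deg3_enum _ _ _ hdeg with
      h | h | h | h | h | h | h | h | h | h <;>
      rw [h.1, h.2.1, h.2.2] at hmon <;> rw [hmon]
    · rw [Ideal.Quotient.eq_zero_iff_mem.2 (monJ _ (by omega))]; exact zero_mem _
    · rw [Ideal.Quotient.eq_zero_iff_mem.2 (monJ _ (by omega))]; exact zero_mem _
    · rw [Ideal.Quotient.eq_zero_iff_mem.2 (monJ _ (by omega))]; exact zero_mem _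
    · exact smul_v_mem _ 0 rfl
    · exact smul_v_mem _ 1 rfl
    · exact smul_v_mem _ 2 rfl
    · exact smul_v_mem _ 3 rfl
    · exact smul_v_mem _ 4 rfl
    · exact smul_v_mem _ 5 rfl
    · rw [← hmon, coeff_squares hpI m (by omega) (by omega) (by omega), monomial_zero, map_zero]
      exact zero_mem _
  · rw [Submodule.span_le]
    rintro _ ⟨i, rfl⟩
    exact v3_mem i

lemma gp4_eq : gradedPiece (Jc k) (Ic k) 4 = Submodule.span k (Set.range (v4 k)) := by
  apply le_antisymm
  · rintro x hx
    obtain ⟨p, hpI, hpH, rfl⟩ := mem_gradedPiece_elim hx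
    rw [← support_sum_monomial_coeff p, map_sum]
    apply Submodule.sum_mem
    intro m hm
    have hdeg : m 0 + m 1 + m 2 = 4 := by
      rw [← degree_eq_sum3]
      by_contra h
      exact (mem_support_iff.1 hm) (hpH.coeff_eq_zero h)
    have hmon := eq_mon m
    rcases deg4_enum _ _ _ hdeg with
      h | h | h | h | h | h | h
    · rw [hmon, Ideal.Quotient.eq_zero_iff_mem.2 (monJ _ (by exact h))]
      exact zero_mem _
    all_goals rw [h.1, h.2.1, h.2.2] at hmon; rw [hmon]
    · exact smul_v_mem _ 0 rfl
    · exact smul_v_mem _ 1 rfl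
    · exact smul_v_mem _ 2 rfl
    · exact smul_v_mem _ 3 rfl
    · exact smul_v_mem _ 4 rfl
    · exact smul_v_mem _ 5 rfl
  · rw [Submodule.span_le]
    rintro _ ⟨i, rfl⟩
    exact v4_mem i

lemma linIndep_vmon (w : Fin 6 → (Fin 3 →₀ ℕ))
    (hw : ∀ i, w i 0 < 3 ∧ w i 1 < 3 ∧ w i 2 < 3)
    (hne : ∀ i j : Fin 6, i ≠ j → w i ≠ w j) :
    LinearIndependent k (fun i => Ideal.Quotient.mk (Jc k) (monomial (w i) (1:k))) := by
  rw [Fintype.linearIndependent_iff]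
  intro g hg
  have hmk : Ideal.Quotient.mk (Jc k) (∑ i : Fin 6, monomial (w i) (g i)) = 0 := by
    rw [map_sum, ← hg]
    congr 1
    ext i
    rw [mk_smul, C_mul_monomial, mul_one]
  rw [Ideal.Quotient.eq_zero_iff_mem] at hmk
  intro i
  have := coeff_cubes hmk (w i) (hw i).1 (hw i).2.1 (hw i).2.2
  rw [coeff_sum] at this
  rw [Finset.sum_eq_single i] at this
  · rwa [coeff_monomial, if_pos rfl] at this
  · intro j _ hji
    rw [coeff_monomial, if_neg (hne j i hji)]
  · intro h; exact absurd (Finset.mem_univ i) h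

lemma linIndep_v3 : LinearIndependent k (v3 k) := by
  apply linIndep_vmon
  · intro i
    rw [w3_def, mon_apply0, mon_apply1, mon_apply2]
    exact (by decide :
      ∀ j : Fin 6, (E3 j).1 < 3 ∧ (E3 j).2.1 < 3 ∧ (E3 j).2.2 < 3) i
  · intro i j hij h
    rw [w3_def, w3_def, mon_eq_mon_iff] at h
    exact hij ((by decide : ∀ i' j' : Fin 6,
      (E3 i').1 = (E3 j').1 ∧ (E3 i').2.1 = (E3 j').2.1 ∧ (E3 i').2.2 = (E3 j').2.2
        → i' = j') i j h)

lemma linIndep_v4 : LinearIndependent k (v4 k) := by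
  apply linIndep_vmon
  · intro i
    rw [w4_def, mon_apply0, mon_apply1, mon_apply2]
    exact (by decide :
      ∀ j : Fin 6, (E4 j).1 < 3 ∧ (E4 j).2.1 < 3 ∧ (E4 j).2.2 < 3) i
  · intro i j hij h
    rw [w4_def, w4_def, mon_eq_mon_iff] at h
    exact hij ((by decide : ∀ i' j' : Fin 6,
      (E4 i').1 = (E4 j').1 ∧ (E4 i').2.1 = (E4 j').2.1 ∧ (E4 i').2.2 = (E4 j').2.2
        → i' = j') i j h)

lemma finrank_gp3 : Module.finrank k (gradedPiece (Jc k) (Ic k) 3) = 6 := by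
  rw [gp3_eq, finrank_span_eq_card (R := k) (b := v3 k) linIndep_v3, Fintype.card_fin]

lemma finrank_gp4 : Module.finrank k (gradedPiece (Jc k) (Ic k) 4) = 6 := by
  rw [gp4_eq, finrank_span_eq_card (R := k) (b := v4 k) linIndep_v4, Fintype.card_fin]

end Span
section Analysis

variable {k : Type} [Field k]

lemma mon_eq_iff {i j l : ℕ} {m : Fin 3 →₀ ℕ} :
    mon i j l = m ↔ i = m 0 ∧ j = m 1 ∧ l = m 2 := by
  constructor
  · rintro rfl
    simp [mon_apply0, mon_apply1, mon_apply2]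
  · rintro ⟨h1, h2, h3⟩
    rw [h1, h2, h3]
    exact (eq_mon m).symm

lemma coeff_mon' (c : k) (i j l : ℕ) (m : Fin 3 →₀ ℕ) :
    coeff m (monomial (mon i j l) c : S3 k)
      = if i = m 0 ∧ j = m 1 ∧ l = m 2 then c else 0 := by
  rw [coeff_monomial]
  by_cases h : i = m 0 ∧ j = m 1 ∧ l = m 2
  · rw [if_pos h, if_pos (mon_eq_iff.2 h)]
  · rw [if_neg h, if_neg (fun hh => h (mon_eq_iff.1 hh))]

lemma decomp_deg1 {ℓ : S3 k} (hℓ : ℓ.IsHomogeneous 1) :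
    ℓ = C (coeff (mon 1 0 0) ℓ) * X 0 + C (coeff (mon 0 1 0) ℓ) * X 1
        + C (coeff (mon 0 0 1) ℓ) * X 2 := by
  have hrhs : (C (coeff (mon 1 0 0) ℓ) * X 0 + C (coeff (mon 0 1 0) ℓ) * X 1
        + C (coeff (mon 0 0 1) ℓ) * X 2 : S3 k)
      = monomial (mon 1 0 0) (coeff (mon 1 0 0) ℓ)
        + monomial (mon 0 1 0) (coeff (mon 0 1 0) ℓ)
        + monomial (mon 0 0 1) (coeff (mon 0 0 1) ℓ) := by
    rw [monomial_mon, monomial_mon, monomial_mon]; ring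
  apply MvPolynomial.ext
  intro m
  rw [hrhs, coeff_add, coeff_add, coeff_mon', coeff_mon', coeff_mon']
  by_cases h : m 0 + m 1 + m 2 = 1
  · rcases (by omega : (m 0 = 1 ∧ m 1 = 0 ∧ m 2 = 0) ∨ (m 0 = 0 ∧ m 1 = 1 ∧ m 2 = 0) ∨
        (m 0 = 0 ∧ m 1 = 0 ∧ m 2 = 1)) with h' | h' | h' <;>
      · rw [eq_mon m, h'.1, h'.2.1, h'.2.2, mon_apply0, mon_apply1, mon_apply2]
        norm_num
  · rw [hℓ.coeff_eq_zero (by rw [degree_eq_sum3]; omega),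
      if_neg (by omega), if_neg (by omega), if_neg (by omega)]
    norm_num

lemma coeff_lmul (a b c : k) (p : S3 k) (i j l : ℕ) :
    coeff (mon i j l) ((C a * X 0 + C b * X 1 + C c * X 2) * p)
      = a * (if i ≠ 0 then coeff (mon (i-1) j l) p else 0)
      + b * (if j ≠ 0 then coeff (mon i (j-1) l) p else 0)
      + c * (if l ≠ 0 then coeff (mon i j (l-1)) p else 0) := by
  rw [add_mul, add_mul, coeff_add, coeff_add, coeff_CXmul, coeff_CXmul, coeff_CXmul,
    mon_sub0, mon_sub1, mon_sub2, mon_apply0, mon_apply1, mon_apply2]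

lemma prod2_ne {x y : k} (hx : x ≠ 0) (hy : y ≠ 0) : x ^ 2 * y ≠ 0 :=
  mul_ne_zero (pow_ne_zero _ hx) hy

lemma prod2_ne' {x y : k} (hx : x ≠ 0) (hy : y ≠ 0) : x * y ^ 2 ≠ 0 :=
  mul_ne_zero hx (pow_ne_zero _ hy)

lemma not_inj (a b c : k) :
    ¬ (∀ m ∈ gradedPiece (Jc k) (Ic k) 3,
        Ideal.Quotient.mk (Jc k) (C a * X 0 + C b * X 1 + C c * X 2) * m = 0 → m = 0) := by
  intro hinj
  set ℓ : S3 k := C a * X 0 + C b * X 1 + C c * X 2 with hℓ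
  have hwit : ∀ i j l : ℕ, (2 ≤ i ∨ 2 ≤ j ∨ 2 ≤ l) → i + j + l = 3 → i < 3 → j < 3 → l < 3 →
      ℓ * monomial (mon i j l) (1:k) ∈ Jc k → False := by
    intro i j l hI2 hd h1 h2 h3 hJ
    have hm := mem_gradedPiece_intro (monI (1:k) hI2)
      (isHomogeneous_monomial _ (by rw [mon_degree, hd]))
    have := hinj _ hm (by rw [← map_mul, Ideal.Quotient.eq_zero_iff_mem]; exact hJ)
    exact mk_mon_ne h1 h2 h3 this
  set p : S3 k := monomial (mon 2 1 0) (a^2*b) - monomial (mon 2 0 1) (a^2*c)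
      - monomial (mon 1 2 0) (a*b^2) + monomial (mon 0 2 1) (b^2*c)
      + monomial (mon 1 0 2) (a*c^2) - monomial (mon 0 1 2) (b*c^2) with hp
  have hpI : p ∈ Ic k := by
    rw [hp]
    exact sub_mem (add_mem (add_mem (sub_mem (sub_mem (monI _ (by omega)) (monI _ (by omega)))
      (monI _ (by omega))) (monI _ (by omega))) (monI _ (by omega))) (monI _ (by omega))
  have hpH : p.IsHomogeneous 3 := by
    rw [← mem_homogeneousSubmodule, hp]
    have hh : ∀ (i j l : ℕ) (r : k), i + j + l = 3 →
        monomial (mon i j l) r ∈ homogeneousSubmodule (Fin 3) k 3 := by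
      intro i j l r hd
      rw [mem_homogeneousSubmodule]
      exact isHomogeneous_monomial _ (by rw [mon_degree, hd])
    exact sub_mem (add_mem (add_mem (sub_mem (sub_mem (hh _ _ _ _ (by norm_num))
      (hh _ _ _ _ (by norm_num))) (hh _ _ _ _ (by norm_num))) (hh _ _ _ _ (by norm_num)))
      (hh _ _ _ _ (by norm_num))) (hh _ _ _ _ (by norm_num))
  have hmul : ℓ * p ∈ Jc k := by
    have hid : ℓ * p
        = (C (a^3*b) * X 1 - C (a^3*c) * X 2) * X 0 ^ 3
          + (C (b^3*c) * X 2 - C (a*b^3) * X 0) * X 1 ^ 3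
          + (C (a*c^3) * X 0 - C (b*c^3) * X 1) * X 2 ^ 3 := by
      rw [hℓ, hp]; simp only [monomial_mon, map_mul, map_pow, map_one, map_zero]; ring
    rw [hid]; exact memJ3 _ _ _
  have hp0 : p ∈ Jc k := by
    have hm := mem_gradedPiece_intro hpI hpH
    have := hinj _ hm (by rw [← map_mul, Ideal.Quotient.eq_zero_iff_mem]; exact hmul)
    rwa [Ideal.Quotient.eq_zero_iff_mem] at this
  have key : ∀ i j l : ℕ, i < 3 → j < 3 → l < 3 → coeff (mon i j l) p = 0 := by
    intro i j l h1 h2 h3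
    exact coeff_cubes hp0 _ (by rwa [mon_apply0]) (by rwa [mon_apply1]) (by rwa [mon_apply2])
  have e1 : a = 0 ∨ b = 0 := by
    have h := key 2 1 0 (by norm_num) (by norm_num) (by norm_num)
    rw [hp] at h
    simp only [coeff_sub, coeff_add, coeff_mon_mon] at h
    norm_num at h
    exact h
  have e4 : b = 0 ∨ c = 0 := by
    have h := key 0 2 1 (by norm_num) (by norm_num) (by norm_num)
    rw [hp] at h
    simp only [coeff_sub, coeff_add, coeff_mon_mon] at h
    norm_num at h
    exact h
  have e5 : a = 0 ∨ c = 0 := by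
    have h := key 1 0 2 (by norm_num) (by norm_num) (by norm_num)
    rw [hp] at h
    simp only [coeff_sub, coeff_add, coeff_mon_mon] at h
    norm_num at h
    exact h
  rcases eq_or_ne a 0 with ha | ha
  · rcases eq_or_ne b 0 with hb | hb
    · rcases eq_or_ne c 0 with hc | hc
      · subst ha; subst hb; subst hc
        refine hwit 2 1 0 (by omega) (by omega) (by omega) (by omega) (by omega) ?_
        rw [show ℓ * monomial (mon 2 1 0) (1:k)
            = 0 * X 0 ^ 3 + 0 * X 1 ^ 3 + 0 * X 2 ^ 3 by
          rw [hℓ]; simp only [monomial_mon, map_mul, map_pow, map_one, map_zero]; ring]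
        exact memJ3 _ _ _
      · subst ha; subst hb
        refine hwit 0 1 2 (by omega) (by omega) (by omega) (by omega) (by omega) ?_
        rw [show ℓ * monomial (mon 0 1 2) (1:k)
            = 0 * X 0 ^ 3 + 0 * X 1 ^ 3 + (C c * X 1) * X 2 ^ 3 by
          rw [hℓ]; simp only [monomial_mon, map_mul, map_pow, map_one, map_zero]; ring]
        exact memJ3 _ _ _
    · rcases eq_or_ne c 0 with hc | hc
      · subst ha; subst hc
        refine hwit 1 2 0 (by omega) (by omega) (by omega) (by omega) (by omega) ?_
        rw [show ℓ * monomial (mon 1 2 0) (1:k)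
            = 0 * X 0 ^ 3 + (C b * X 0) * X 1 ^ 3 + 0 * X 2 ^ 3 by
          rw [hℓ]; simp only [monomial_mon, map_mul, map_pow, map_one, map_zero]; ring]
        exact memJ3 _ _ _
      · rcases e4 with h | h
        · exact hb h
        · exact hc h
  · rcases eq_or_ne b 0 with hb | hb
    · rcases eq_or_ne c 0 with hc | hc
      · subst hb; subst hc
        refine hwit 2 1 0 (by omega) (by omega) (by omega) (by omega) (by omega) ?_
        rw [show ℓ * monomial (mon 2 1 0) (1:k)
            = (C a * X 1) * X 0 ^ 3 + 0 * X 1 ^ 3 + 0 * X 2 ^ 3 by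
          rw [hℓ]; simp only [monomial_mon, map_mul, map_pow, map_one, map_zero]; ring]
        exact memJ3 _ _ _
      · rcases e5 with h | h
        · exact ha h
        · exact hc h
    · rcases e1 with h | h
      · exact ha h
      · exact hb h

lemma not_surj (a b c : k) :
    ¬ (∀ m' ∈ gradedPiece (Jc k) (Ic k) 4, ∃ m ∈ gradedPiece (Jc k) (Ic k) 3,
        Ideal.Quotient.mk (Jc k) (C a * X 0 + C b * X 1 + C c * X 2) * m = m') := by
  intro hsurj
  set ℓ : S3 k := C a * X 0 + C b * X 1 + C c * X 2 with hℓ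
  have main : ∀ i j l : ℕ, (2 ≤ i ∨ 2 ≤ j ∨ 2 ≤ l) → i + j + l = 4 →
      ∃ p : S3 k, coeff (mon 1 1 1) p = 0 ∧ ℓ * p - monomial (mon i j l) 1 ∈ Jc k := by
    intro i j l h2 hd
    obtain ⟨m, hm3, hmul⟩ := hsurj (Ideal.Quotient.mk _ (monomial (mon i j l) (1:k)))
      (mem_gradedPiece_intro (monI _ h2) (isHomogeneous_monomial _ (by rw [mon_degree, hd])))
    obtain ⟨p, hpI, hpH, rfl⟩ := mem_gradedPiece_elim hm3
    refine ⟨p, coeff_squares hpI _ (by rw [mon_apply0]; omega) (by rw [mon_apply1]; omega)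
      (by rw [mon_apply2]; omega), ?_⟩
    have h0 : Ideal.Quotient.mk (Jc k) (ℓ * p - monomial (mon i j l) 1) = 0 := by
      rw [map_sub, map_mul, hmul, sub_self]
    rwa [Ideal.Quotient.eq_zero_iff_mem] at h0
  have extract : ∀ i j l : ℕ, i < 3 → j < 3 → l < 3 → ∀ i' j' l' : ℕ, ∀ p : S3 k,
      ℓ * p - monomial (mon i' j' l') 1 ∈ Jc k →
      a * (if i ≠ 0 then coeff (mon (i-1) j l) p else 0)
      + b * (if j ≠ 0 then coeff (mon i (j-1) l) p else 0)
      + c * (if l ≠ 0 then coeff (mon i j (l-1)) p else 0)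
      = if i' = i ∧ j' = j ∧ l' = l then 1 else 0 := by
    intro i j l h1 h2 h3 i' j' l' p hq
    have h := coeff_cubes hq (mon i j l) (by rwa [mon_apply0]) (by rwa [mon_apply1])
      (by rwa [mon_apply2])
    rw [coeff_sub, coeff_lmul, coeff_mon_mon, sub_eq_zero] at h
    exact h
  -- derive c = 0 using target x²y²
  have hc : c = 0 := by
    obtain ⟨p, hX, hq⟩ := main 2 2 0 (by omega) (by omega)
    have H1 := extract 2 2 0 (by omega) (by omega) (by omega) 2 2 0 p hq
    have H2 := extract 2 0 2 (by omega) (by omega) (by omega) 2 2 0 p hq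
    have H3 := extract 0 2 2 (by omega) (by omega) (by omega) 2 2 0 p hq
    have H4 := extract 2 1 1 (by omega) (by omega) (by omega) 2 2 0 p hq
    have H5 := extract 1 2 1 (by omega) (by omega) (by omega) 2 2 0 p hq
    have H6 := extract 1 1 2 (by omega) (by omega) (by omega) 2 2 0 p hq
    norm_num at H1 H2 H3 H4 H5 H6
    have hcc : c^2 = 0 := by
      linear_combination -c^2*H1 - b^2*H2 - a^2*H3 + b*c*H4 + a*c*H5 + a*b*H6 - 3*a*b*c*hX
    exact pow_eq_zero_iff (by norm_num) |>.1 hcc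
  have hb : b = 0 := by
    obtain ⟨p, hX, hq⟩ := main 2 0 2 (by omega) (by omega)
    have H1 := extract 2 2 0 (by omega) (by omega) (by omega) 2 0 2 p hq
    have H2 := extract 2 0 2 (by omega) (by omega) (by omega) 2 0 2 p hq
    have H3 := extract 0 2 2 (by omega) (by omega) (by omega) 2 0 2 p hq
    have H4 := extract 2 1 1 (by omega) (by omega) (by omega) 2 0 2 p hq
    have H5 := extract 1 2 1 (by omega) (by omega) (by omega) 2 0 2 p hq
    have H6 := extract 1 1 2 (by omega) (by omega) (by omega) 2 0 2 p hq
    norm_num at H1 H2 H3 H4 H5 H6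
    have hbb : b^2 = 0 := by
      linear_combination -c^2*H1 - b^2*H2 - a^2*H3 + b*c*H4 + a*c*H5 + a*b*H6 - 3*a*b*c*hX
    exact pow_eq_zero_iff (by norm_num) |>.1 hbb
  have ha : a = 0 := by
    obtain ⟨p, hX, hq⟩ := main 0 2 2 (by omega) (by omega)
    have H1 := extract 2 2 0 (by omega) (by omega) (by omega) 0 2 2 p hq
    have H2 := extract 2 0 2 (by omega) (by omega) (by omega) 0 2 2 p hq
    have H3 := extract 0 2 2 (by omega) (by omega) (by omega) 0 2 2 p hq
    have H4 := extract 2 1 1 (by omega) (by omega) (by omega) 0 2 2 p hq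
    have H5 := extract 1 2 1 (by omega) (by omega) (by omega) 0 2 2 p hq
    have H6 := extract 1 1 2 (by omega) (by omega) (by omega) 0 2 2 p hq
    norm_num at H1 H2 H3 H4 H5 H6
    have haa : a^2 = 0 := by
      linear_combination -c^2*H1 - b^2*H2 - a^2*H3 + b*c*H4 + a*c*H5 + a*b*H6 - 3*a*b*c*hX
    exact pow_eq_zero_iff (by norm_num) |>.1 haa
  -- now ℓ = 0, contradiction with surjectivity onto a nonzero class
  have hℓ0 : ℓ = 0 := by rw [hℓ, ha, hb, hc]; simp
  obtain ⟨m, _, hm⟩ := hsurj (Ideal.Quotient.mk _ (monomial (mon 2 2 0) (1:k)))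
    (mem_gradedPiece_intro (monI _ (by omega)) (isHomogeneous_monomial _ (by rw [mon_degree])))
  rw [hℓ0, map_zero, zero_mul] at hm
  exact mk_mon_ne (by omega) (by omega) (by omega) hm.symm

lemma not_WLE_at3 {ℓ : S3 k} (hℓ : ℓ ∈ homogeneousSubmodule (Fin 3) k 1) :
    ¬ ((∀ m ∈ gradedPiece (Jc k) (Ic k) 3,
          Ideal.Quotient.mk (Jc k) ℓ * m = 0 → m = 0) ∨
      (∀ m' ∈ gradedPiece (Jc k) (Ic k) 4, ∃ m ∈ gradedPiece (Jc k) (Ic k) 3,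
          Ideal.Quotient.mk (Jc k) ℓ * m = m')) := by
  have hd := decomp_deg1 ((mem_homogeneousSubmodule 1 ℓ).1 hℓ)
  rintro (h | h)
  · rw [hd] at h
    exact not_inj _ _ _ h
  · rw [hd] at h
    exact not_surj _ _ _ h

end Analysis

/-- **Example.** Let `k` be a field of characteristic zero, `S = k[x,y,z]`,
`I = (x², y², z²)` and `J = (x³, y³, z³)`.  Then `M = I/J` satisfies
`dim_k M₃ = dim_k M₄`, the class of `x²(y−z) + y²(z−x) + z²(x−y)` is a nonzero element of
`M₃` killed by `x + y + z`, and consequently `M` has neither the weak nor the strong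
Lefschetz property. -/
theorem stmt17 {k : Type} [Field k] [CharZero k]
    (I J : Ideal (MvPolynomial (Fin 3) k))
    (hI : I = Ideal.span {X 0 ^ 2, X 1 ^ 2, X 2 ^ 2})
    (hJ : J = Ideal.span {X 0 ^ 3, X 1 ^ 3, X 2 ^ 3}) :
    Module.finrank k (gradedPiece J I 3) = Module.finrank k (gradedPiece J I 4) ∧
    Ideal.Quotient.mk J (X 0 ^ 2 * (X 1 - X 2) + X 1 ^ 2 * (X 2 - X 0)
      + X 2 ^ 2 * (X 0 - X 1)) ∈ gradedPiece J I 3 ∧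
    Ideal.Quotient.mk J (X 0 ^ 2 * (X 1 - X 2) + X 1 ^ 2 * (X 2 - X 0)
      + X 2 ^ 2 * (X 0 - X 1) : MvPolynomial (Fin 3) k) ≠ 0 ∧
    Ideal.Quotient.mk J ((X 0 + X 1 + X 2) * (X 0 ^ 2 * (X 1 - X 2) + X 1 ^ 2 * (X 2 - X 0)
      + X 2 ^ 2 * (X 0 - X 1)) : MvPolynomial (Fin 3) k) = 0 ∧
    ¬ HasWLP J I ∧ ¬ HasSLP J I := by
  obtain rfl : J = Jc k := hJ
  obtain rfl : I = Ic k := hI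
  set q : S3 k := X 0 ^ 2 * (X 1 - X 2) + X 1 ^ 2 * (X 2 - X 0) + X 2 ^ 2 * (X 0 - X 1)
    with hqdef
  have hqI : q ∈ Ic k := by
    rw [show q = (X 1 - X 2) * X 0 ^ 2 + (X 2 - X 0) * X 1 ^ 2 + (X 0 - X 1) * X 2 ^ 2 by
      rw [hqdef]; ring]
    exact memI2 _ _ _
  have hqmon : q = monomial (mon 2 1 0) 1 - monomial (mon 2 0 1) 1
      + (monomial (mon 0 2 1) 1 - monomial (mon 1 2 0) 1)
      + (monomial (mon 1 0 2) 1 - monomial (mon 0 1 2) 1) := by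
    rw [hqdef]; simp only [monomial_mon, map_one]; ring
  have hqH : q.IsHomogeneous 3 := by
    rw [← mem_homogeneousSubmodule, hqmon]
    have hh : ∀ i j l : ℕ, i + j + l = 3 →
        (monomial (mon i j l) (1:k)) ∈ homogeneousSubmodule (Fin 3) k 3 := fun i j l hd =>
      (mem_homogeneousSubmodule _ _).2 (isHomogeneous_monomial _ (by rw [mon_degree, hd]))
    exact add_mem (add_mem (sub_mem (hh 2 1 0 rfl) (hh 2 0 1 rfl))
      (sub_mem (hh 0 2 1 rfl) (hh 1 2 0 rfl))) (sub_mem (hh 1 0 2 rfl) (hh 0 1 2 rfl))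
  refine ⟨finrank_gp3.trans finrank_gp4.symm, mem_gradedPiece_intro hqI hqH, ?_, ?_, ?_, ?_⟩
  · intro h0
    rw [Ideal.Quotient.eq_zero_iff_mem] at h0
    have h := coeff_cubes h0 (mon 2 1 0) (by rw [mon_apply0]; omega)
      (by rw [mon_apply1]; omega) (by rw [mon_apply2]; omega)
    rw [hqmon] at h
    simp only [coeff_sub, coeff_add, coeff_mon_mon] at h
    norm_num at h
  · rw [Ideal.Quotient.eq_zero_iff_mem]
    rw [show (X 0 + X 1 + X 2) * q
        = (X 1 - X 2) * X 0 ^ 3 + (X 2 - X 0) * X 1 ^ 3 + (X 0 - X 1) * X 2 ^ 3 by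
      rw [hqdef]; ring]
    exact memJ3 _ _ _
  · rintro ⟨ℓ, hℓ1, hW⟩
    exact not_WLE_at3 hℓ1 (hW 3)
  · rintro ⟨ℓ, hℓ1, hS⟩
    have h := hS 1 one_pos 3
    rw [pow_one] at h
    exact not_WLE_at3 hℓ1 h
end
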